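/- arXiv:1503.00108 — 16 statements merged into one kernel-verified Lean document; each statement's English description precedes it below -/
import Mathlib

section
/- Let I be a proper ideal of R and let φ be a function from the set of ideals of R to itself. Then I is a φ-n-absorbing primary ideal of R if and only if for all x₁, …, x_n ∈ R with x₁x₂⋯x_n ∉ √I, the ideal quotient (I : x₁x₂⋯x_n) is contained in the union (⋃_{i=1}^{n-1} (√I : x₁⋯x̂ᵢ⋯x_n)) ∪ (I : x₁x₂⋯x_{n-1}) ∪ (φ(I) : x₁x₂⋯x_n). -/
/-- A proper ideal `I` is `φ`-`n`-absorbing primary: whenever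
`a₁ ⋯ a_{n+1} ∈ I \ φ I`, either `a₁ ⋯ a_n ∈ I` or the product of `a_{n+1}`
with `n - 1` of `a₁, …, a_n` lies in `√I`. -/
def IsPhiNAbsorbingPrimary {R : Type*} [CommRing R] (φ : Ideal R → Ideal R) (n : ℕ)
    (I : Ideal R) : Prop :=
  I ≠ ⊤ ∧ ∀ a : Fin (n + 1) → R,
    (∏ i, a i) ∈ I → (∏ i, a i) ∉ φ I →
      ((∏ i : Fin n, a i.castSucc) ∈ I ∨
        ∃ i : Fin n, (∏ j ∈ Finset.univ.erase i.castSucc, a j) ∈ I.radical)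

/-- Product over `univ.erase p` equals product over `succAbove p`. -/
lemma prodEraseAux {M : Type*} [CommMonoid M] {k : ℕ} (f : Fin (k + 1) → M) (p : Fin (k + 1)) :
    ∏ j ∈ Finset.univ.erase p, f j = ∏ j : Fin k, f (p.succAbove j) := by
  conv_lhs => rw [Fin.univ_succAbove k p]
  rw [Finset.erase_cons, Finset.prod_map]
  rfl

/-- Splitting off the head of a product over an erased set at a successor index. -/
lemma prodEraseSucc {M : Type*} [CommMonoid M] {m : ℕ} (a : Fin (m + 2) → M) (i : Fin (m + 1)) :
    ∏ j ∈ Finset.univ.erase i.succ, a j = a 0 * ∏ j ∈ Finset.univ.erase i, a j.succ := by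
  rw [prodEraseAux, prodEraseAux, Fin.prod_univ_succ]
  simp

/-- Theorem 2.3: `I` is `φ`-`n`-absorbing primary iff for all `x₁, …, xₙ` with
`x₁ ⋯ xₙ ∉ √I`, `(I : x₁ ⋯ xₙ)` is contained in the union
`(⋃_{i=1}^{n-1} (√I : x₁ ⋯ x̂ᵢ ⋯ xₙ)) ∪ (I : x₁ ⋯ x_{n-1}) ∪ (φ(I) : x₁ ⋯ xₙ)`. -/
theorem stmt_0 {R : Type*} [CommRing R] [Nontrivial R] (n : ℕ) (hn : 0 < n)
    (φ : Ideal R → Ideal R) (hφ : ∀ J : Ideal R, φ J ≤ J) (I : Ideal R) (hI : I ≠ ⊤) :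
    IsPhiNAbsorbingPrimary φ n I ↔
      ∀ x : Fin n → R, (∏ i, x i) ∉ I.radical →
        (↑(Submodule.colon I (Ideal.span {∏ i, x i})) : Set R) ⊆
          (⋃ (i : Fin n) (_ : (i : ℕ) + 1 < n),
              (↑(Submodule.colon I.radical
                  (Ideal.span {∏ j ∈ Finset.univ.erase i, x j})) : Set R)) ∪
            (↑(Submodule.colon I
                (Ideal.span
                  {∏ j ∈ Finset.univ.filter (fun j : Fin n => (j : ℕ) + 1 < n), x j})) : Set R) ∪
            (↑(Submodule.colon (φ I) (Ideal.span {∏ i, x i})) : Set R) := by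
  obtain ⟨m, rfl⟩ : ∃ m, n = m + 1 := ⟨n - 1, by omega⟩
  have hfilter : (Finset.univ.filter (fun j : Fin (m + 1) => (j : ℕ) + 1 < m + 1))
      = Finset.univ.erase (Fin.last m) := by
    ext j
    simp only [Finset.mem_filter, Finset.mem_univ, true_and, Finset.mem_erase, and_true]
    have hj := j.is_le
    rw [Fin.ne_iff_vne, Fin.val_last]
    omega
  have hlastprod : ∀ x : Fin (m + 1) → R,
      ∏ j ∈ Finset.univ.erase (Fin.last m), x j = ∏ j : Fin m, x j.castSucc := by
    intro x; rw [prodEraseAux]; simp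
  constructor
  · rintro ⟨-, hAbs⟩ x hx r hr
    rw [SetLike.mem_coe, Ideal.mem_colon_span_singleton] at hr
    by_cases hφmem : r * ∏ i, x i ∈ φ I
    · exact Or.inr (by simpa [Ideal.mem_colon_span_singleton] using hφmem)
    · have hprod : (∏ i, (Fin.cons r x : Fin (m + 2) → R) i) = r * ∏ i, x i :=
        Fin.prod_cons r x
      rcases hAbs (Fin.cons r x) (by rwa [hprod]) (by rwa [hprod]) with h1 | ⟨i, h2⟩
      · left; right
        rw [Fin.prod_univ_succ] at h1
        simp only [Fin.castSucc_zero, Fin.cons_zero, ← Fin.succ_castSucc, Fin.cons_succ] at h1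
        rw [SetLike.mem_coe, Ideal.mem_colon_span_singleton, hfilter, hlastprod]
        exact h1
      · by_cases hi : i = 0
        · subst hi
          rw [Fin.castSucc_zero, prodEraseAux] at h2
          simp only [Fin.succAbove_zero, Fin.cons_succ] at h2
          exact absurd h2 hx
        · obtain ⟨j, rfl⟩ := Fin.eq_succ_of_ne_zero hi
          rw [← Fin.succ_castSucc, prodEraseSucc] at h2
          simp only [Fin.cons_zero, Fin.cons_succ] at h2
          left; left
          refine Set.mem_iUnion.2 ⟨j.castSucc, Set.mem_iUnion.2 ⟨?_, ?_⟩⟩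
          · simp only [Fin.coe_castSucc]
            exact Nat.succ_lt_succ j.isLt
          · rw [SetLike.mem_coe, Ideal.mem_colon_span_singleton]
            exact h2
  · intro h
    refine ⟨hI, ?_⟩
    intro a haI haφ
    by_cases hx : (∏ t : Fin (m + 1), a t.succ) ∈ I.radical
    · refine Or.inr ⟨0, ?_⟩
      rw [Fin.castSucc_zero, prodEraseAux]
      simpa using hx
    · have hprod : (∏ i, a i) = a 0 * ∏ t : Fin (m + 1), a t.succ := Fin.prod_univ_succ a
      have hr : a 0 ∈ (↑(Submodule.colon I (Ideal.span {∏ t : Fin (m + 1), a t.succ})) : Set R) := by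
        rw [SetLike.mem_coe, Ideal.mem_colon_span_singleton, ← hprod]
        exact haI
      have := h (fun t => a t.succ) hx hr
      simp only [Set.mem_union, Set.mem_iUnion, SetLike.mem_coe,
        Ideal.mem_colon_span_singleton] at this
      rcases this with (⟨i, hi, hmem⟩ | hmem) | hmem
      · right
        have hival : (i : ℕ) < m := by omega
        refine ⟨⟨(i : ℕ) + 1, Nat.succ_lt_succ hival⟩, ?_⟩
        have hcast : (⟨(i : ℕ) + 1, Nat.succ_lt_succ hival⟩ : Fin (m + 1)).castSucc = i.succ := by
          ext; simp
        rw [hcast, prodEraseSucc]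
        exact hmem
      · left
        rw [hfilter, hlastprod] at hmem
        rw [Fin.prod_univ_succ]
        simpa only [← Fin.succ_castSucc, Fin.castSucc_zero] using hmem
      · rw [← hprod] at hmem
        exact absurd hmem haφ
end

section
/- If I is a φ-n-absorbing primary ideal of R such that √(φ(I)) = φ(√I), then √I is a φ-n-absorbing ideal of R. -/
/-- A proper ideal `P` is `φ`-`n`-absorbing: whenever `a₁ ⋯ a_{n+1} ∈ P \ φ P`,
some product of `n` of the `aᵢ`'s lies in `P`. -/
def IsPhiNAbsorbing {R : Type*} [CommRing R] (φ : Ideal R → Ideal R) (n : ℕ)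
    (P : Ideal R) : Prop :=
  P ≠ ⊤ ∧ ∀ a : Fin (n + 1) → R,
    (∏ i, a i) ∈ P → (∏ i, a i) ∉ φ P →
      ∃ i : Fin (n + 1), (∏ j ∈ Finset.univ.erase i, a j) ∈ P

theorem stmt_1 {R : Type*} [CommRing R] [Nontrivial R] (n : ℕ) (hn : 0 < n)
    (φ : Ideal R → Ideal R) (hφ : ∀ J : Ideal R, φ J ≤ J) (I : Ideal R)
    (hrad : (φ I).radical = φ I.radical)
    (hI : IsPhiNAbsorbingPrimary φ n I) :
    IsPhiNAbsorbing φ n I.radical := by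
  obtain ⟨hItop, hprim⟩ := hI
  constructor
  · simpa [Ideal.radical_eq_top] using hItop
  intro a hmem hnmem
  rw [Ideal.mem_radical_iff] at hmem
  obtain ⟨m, hm⟩ := hmem
  have hm' : (∏ i, a i ^ m) ∈ I := by rwa [Finset.prod_pow]
  have hnot : (∏ i, a i ^ m) ∉ φ I := by
    intro h
    rw [Finset.prod_pow] at h
    exact hnmem (hrad ▸ Ideal.mem_radical_iff.mpr ⟨m, h⟩)
  rcases hprim (fun i => a i ^ m) hm' hnot with h | ⟨i, h⟩
  · refine ⟨Fin.last n, ?_⟩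
    have hset : (Finset.univ.erase (Fin.last n) : Finset (Fin (n+1))) =
        Finset.univ.map Fin.castSuccEmb := by
      ext j
      simp only [Finset.mem_erase, Finset.mem_univ, and_true, Finset.mem_map]
      constructor
      · intro hj
        exact ⟨j.castPred hj, trivial, rfl⟩
      · rintro ⟨i, -, rfl⟩
        exact (Fin.castSucc_lt_last i).ne
    rw [Finset.prod_pow] at h
    have : (∏ i : Fin n, a i.castSucc) ∈ I.radical := Ideal.mem_radical_iff.mpr ⟨m, h⟩
    rw [hset, Finset.prod_map]
    simpa using this
  · refine ⟨i.castSucc, ?_⟩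
    rw [Finset.prod_pow] at h
    have := Ideal.mem_radical_iff.mpr ⟨m, h⟩
    rwa [Ideal.radical_idem] at this
end

section
/- Let φ be a function from the set of ideals of R to itself that reverses inclusions, i.e. J ⊆ K implies φ(K) ⊆ φ(J). Suppose that for every 1 ≤ i ≤ k, Iᵢ is a φ-nᵢ-absorbing primary ideal of R such that √(Iᵢ) is a φ-nᵢ-absorbing ideal of R, and set n = n₁ + n₂ + ⋯ + n_k. Then both I₁ ∩ I₂ ∩ ⋯ ∩ I_k and the product I₁I₂⋯I_k are φ-n-absorbing primary ideals of R. -/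
open Finset in

private lemma fin_prod_erase_last {M : Type*} [CommMonoid M] {m : ℕ} (a : Fin (m + 1) → M) :
    ∏ j ∈ Finset.univ.erase (Fin.last m), a j = ∏ i : Fin m, a i.castSucc := by
  rw [← Finset.compl_singleton, ← Fin.image_castSucc,
    Finset.prod_image (fun x _ y _ h => Fin.castSucc_injective _ h)]

private lemma fin_erase_castSucc {m : ℕ} (i : Fin m) :
    (Finset.univ.erase i.castSucc : Finset (Fin (m + 1))) =
      insert (Fin.last m) ((Finset.univ.erase i).image Fin.castSucc) := by
  ext j
  induction j using Fin.lastCases with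
  | last =>
    simp [Finset.mem_erase, (Fin.castSucc_lt_last i).ne']
  | cast j =>
    simp only [Finset.mem_erase, Finset.mem_univ, and_true, Finset.mem_insert,
      Finset.mem_image]
    constructor
    · intro h
      exact Or.inr ⟨j, fun hji => h (by rw [hji]), rfl⟩
    · rintro (h | ⟨u, hu, h⟩)
      · exact absurd h (Fin.castSucc_lt_last j).ne
      · intro hc
        exact hu (Fin.castSucc_injective _ (h.trans hc))

private lemma fin_prod_erase_castSucc {M : Type*} [CommMonoid M] {m : ℕ} (a : Fin (m + 1) → M)
    (i : Fin m) :
    ∏ j ∈ Finset.univ.erase i.castSucc, a j =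
      (∏ j ∈ Finset.univ.erase i, a j.castSucc) * a (Fin.last m) := by
  rw [fin_erase_castSucc, Finset.prod_insert (by
      simp only [Finset.mem_image]
      rintro ⟨u, _, hc⟩
      exact (Fin.castSucc_lt_last u).ne hc)
    , Finset.prod_image (fun x _ y _ h => Fin.castSucc_injective _ h), mul_comm]

private lemma prod_orderEmbOfFin {ι M : Type*} [LinearOrder ι] [CommMonoid M] (T : Finset ι)
    {m : ℕ} (hc : T.card = m) (x : ι → M) :
    ∏ i : Fin m, x (T.orderEmbOfFin hc i) = ∏ i ∈ T, x i := by
  refine Finset.prod_nbij (fun i => T.orderEmbOfFin hc i)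
    (fun i _ => Finset.orderEmbOfFin_mem T hc i) ?_ ?_ (fun _ _ => rfl)
  · exact fun u _ v _ h => (T.orderEmbOfFin hc).injective h
  · intro b hb
    have : b ∈ Set.range (T.orderEmbOfFin hc) := by
      rw [Finset.range_orderEmbOfFin]; exact hb
    obtain ⟨i, hi⟩ := this
    exact ⟨i, by simp, hi⟩

section AuxPhiAbsorbing
open Finset
variable {R : Type*} [CommRing R]

private lemma tuple_of_finset {ι : Type*} [LinearOrder ι] (x : ι → R) (s T : Finset ι)
    (hT : T ⊆ s) {m : ℕ} (hc : T.card = m) :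
    ∃ a : Fin (m + 1) → R,
      (∏ i, a i) = ∏ i ∈ s, x i ∧
      (∏ i : Fin m, a i.castSucc) = ∏ i ∈ T, x i ∧
      ∀ i : Fin m, ∃ t ∈ T,
        (∏ j ∈ Finset.univ.erase i.castSucc, a j) = ∏ j ∈ s.erase t, x j := by
  classical
  refine ⟨Fin.snoc (fun j => x (T.orderEmbOfFin hc j)) (∏ i ∈ s \ T, x i), ?_, ?_, ?_⟩
  · rw [Fin.prod_univ_castSucc]
    simp only [Fin.snoc_castSucc, Fin.snoc_last]
    rw [prod_orderEmbOfFin T hc x, mul_comm, Finset.prod_sdiff hT]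
  · simp only [Fin.snoc_castSucc]
    exact prod_orderEmbOfFin T hc x
  · intro i
    set t := T.orderEmbOfFin hc i with hti
    have htT : t ∈ T := Finset.orderEmbOfFin_mem T hc i
    refine ⟨t, htT, ?_⟩
    rw [fin_prod_erase_castSucc]
    simp only [Fin.snoc_castSucc, Fin.snoc_last]
    have h1 : ∏ j ∈ Finset.univ.erase i, x (T.orderEmbOfFin hc j) = ∏ j ∈ T.erase t, x j := by
      refine Finset.prod_nbij (fun j => T.orderEmbOfFin hc j) ?_ ?_ ?_ (fun _ _ => rfl)
      · intro j hj
        exact Finset.mem_erase.mpr ⟨fun hc' => (Finset.mem_erase.mp hj).1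
          ((T.orderEmbOfFin hc).injective (hc'.trans hti)), Finset.orderEmbOfFin_mem T hc j⟩
      · exact fun u _ v _ h => (T.orderEmbOfFin hc).injective h
      · intro b hb
        have : b ∈ Set.range (T.orderEmbOfFin hc) := by
          rw [Finset.range_orderEmbOfFin]; exact (Finset.mem_erase.mp hb).2
        obtain ⟨j, hj⟩ := this
        refine ⟨j, Finset.mem_erase.mpr ⟨fun hji => (Finset.mem_erase.mp hb).1 ?_,
          Finset.mem_univ j⟩, hj⟩
        rw [← hj, hji, ← hti]
    rw [h1]
    have hsub : T.erase t ⊆ s.erase t := Finset.erase_subset_erase t hT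
    have hsd : (s.erase t) \ (T.erase t) = s \ T := by
      ext u
      simp only [Finset.mem_sdiff, Finset.mem_erase]
      constructor
      · rintro ⟨⟨hut, hus⟩, h⟩
        exact ⟨hus, fun huT => h ⟨hut, huT⟩⟩
      · rintro ⟨hus, huT⟩
        exact ⟨⟨fun he => huT (he ▸ htT), hus⟩, fun hc' => huT hc'.2⟩
    rw [← Finset.prod_sdiff hsub, hsd, mul_comm]

private lemma extract_subset (φ : Ideal R → Ideal R) {n : ℕ} (P : Ideal R)
    (hP : ∀ a : Fin (n + 1) → R, (∏ i, a i) ∈ P → (∏ i, a i) ∉ φ P →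
      ∃ i : Fin (n + 1), (∏ j ∈ Finset.univ.erase i, a j) ∈ P)
    {ι : Type*} [LinearOrder ι] (x : ι → R) :
    ∀ s : Finset ι, n ≤ s.card → (∏ i ∈ s, x i) ∈ P → (∏ i ∈ s, x i) ∉ φ P →
      ∃ T ⊆ s, T.card = n ∧ (∏ i ∈ T, x i) ∈ P := by
  classical
  suffices H : ∀ (c : ℕ) (s : Finset ι), s.card ≤ c → n ≤ s.card → (∏ i ∈ s, x i) ∈ P →
      (∏ i ∈ s, x i) ∉ φ P → ∃ T ⊆ s, T.card = n ∧ (∏ i ∈ T, x i) ∈ P by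
    exact fun s => H s.card s le_rfl
  intro c
  induction c with
  | zero =>
    intro s hsc hcard hmem _
    have : s.card = n := le_antisymm (hsc.trans (Nat.zero_le n)) hcard
    exact ⟨s, Finset.Subset.refl s, this, hmem⟩
  | succ c ihc =>
    intro s hsc hcard hmem hphi
    rcases eq_or_lt_of_le hcard with heq | hlt
    · exact ⟨s, Finset.Subset.refl s, heq.symm, hmem⟩
    · obtain ⟨T₀, hT₀s, hT₀c⟩ := Finset.exists_subset_card_eq hcard
      obtain ⟨a, hprod, hcastp, herase⟩ := tuple_of_finset x s T₀ hT₀s hT₀c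
      obtain ⟨i, hi⟩ := hP a (by rw [hprod]; exact hmem) (by rw [hprod]; exact hphi)
      by_cases hil : i = Fin.last n
      · subst hil
        rw [fin_prod_erase_last, hcastp] at hi
        exact ⟨T₀, hT₀s, hT₀c, hi⟩
      · obtain ⟨j, rfl⟩ := Fin.exists_castSucc_eq.mpr hil
        obtain ⟨t, htT, heq'⟩ := herase j
        rw [heq'] at hi
        have hts : t ∈ s := hT₀s htT
        have hphi' : (∏ j ∈ s.erase t, x j) ∉ φ P := fun hcm => hphi (by
          rw [← Finset.mul_prod_erase s x hts]; exact Ideal.mul_mem_left _ _ hcm)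
        have hce : (s.erase t).card = s.card - 1 := Finset.card_erase_of_mem hts
        obtain ⟨T, hTsub, hTc, hTP⟩ := ihc (s.erase t) (by omega) (by omega) hi hphi'
        exact ⟨T, hTsub.trans (Finset.erase_subset t s), hTc, hTP⟩


private lemma core_lemma {k : ℕ} (hk : 0 < k)
    (φ : Ideal R → Ideal R) (hrev : ∀ J K : Ideal R, J ≤ K → φ K ≤ φ J)
    (m : Fin k → ℕ) (I : Fin k → Ideal R)
    (hprimary : ∀ i, IsPhiNAbsorbingPrimary φ (m i) (I i))
    (habs : ∀ i, IsPhiNAbsorbing φ (m i) (I i).radical)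
    (J : Ideal R) (hle : ∀ j, J ≤ I j)
    (hmul : ∀ y : Fin k → R, (∀ j, y j ∈ I j) → (∏ j, y j) ∈ J)
    (hrad : ∀ x : R, (∀ j, x ∈ (I j).radical) → x ∈ J.radical) :
    IsPhiNAbsorbingPrimary φ (∑ i, m i) J := by
  set n := ∑ i, m i with hn
  constructor
  · intro hJ
    apply (hprimary ⟨0, hk⟩).1
    have := hle ⟨0, hk⟩
    rw [hJ] at this
    exact top_le_iff.mp this
  · intro a hmem hphi
    have hmn : ∀ j, m j ≤ n :=
      fun j => Finset.single_le_sum (f := m) (fun _ _ => Nat.zero_le _) (Finset.mem_univ j)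
    have hstep : ∀ j, ∃ T ⊆ (Finset.univ : Finset (Fin (n + 1))),
        T.card = m j ∧ (∏ i ∈ T, a i) ∈ (I j).radical := by
      intro j
      refine extract_subset φ ((I j).radical) (habs j).2 a Finset.univ ?_ ?_ ?_
      · rw [Finset.card_univ, Fintype.card_fin]
        exact (hmn j).trans (Nat.le_succ n)
      · exact Ideal.le_radical (hle j hmem)
      · exact fun hc => hphi (hrev J (I j).radical ((hle j).trans Ideal.le_radical) hc)
    choose T hTsub hTcard hTmem using hstep
    set U := Finset.univ.biUnion T with hU
    have hTU : ∀ j, T j ⊆ U :=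
      fun j t ht => Finset.mem_biUnion.mpr ⟨j, Finset.mem_univ j, ht⟩
    by_cases hcover : ∀ i : Fin (n + 1), i ≠ Fin.last n → i ∈ U
    · -- counting argument
      have hsubU : Finset.univ.erase (Fin.last n) ⊆ U :=
        fun i hi => hcover i (Finset.mem_erase.mp hi).1
      have hsum : ∑ j, (T j).card = n := Finset.sum_congr rfl fun j _ => hTcard j
      have hUcard_le : U.card ≤ n := le_trans Finset.card_biUnion_le (le_of_eq hsum)
      have hecard : (Finset.univ.erase (Fin.last n)).card = n := by
        rw [Finset.card_erase_of_mem (Finset.mem_univ _), Finset.card_univ, Fintype.card_fin]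
        rfl
      have hUeq : U = Finset.univ.erase (Fin.last n) :=
        (Finset.eq_of_subset_of_card_le hsubU (by rw [hecard]; exact hUcard_le)).symm
      have hUcard : U.card = n := by rw [hUeq, hecard]
      -- each element of U lies in exactly one T j
      have hcount : ∀ u ∈ U, (Finset.univ.filter (fun j => u ∈ T j)).card = 1 := by
        have h1 : ∑ u ∈ U, (Finset.univ.filter (fun j => u ∈ T j)).card = ∑ j, (T j).card := by
          simp_rw [Finset.card_filter]
          rw [Finset.sum_comm]
          refine Finset.sum_congr rfl fun j _ => ?_
          rw [← Finset.card_filter]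
          rw [show U.filter (fun u => u ∈ T j) = T j by
            ext u
            simp only [Finset.mem_filter]
            exact ⟨fun h => h.2, fun h => ⟨hTU j h, h⟩⟩]
        have h2 : ∑ u ∈ U, (Finset.univ.filter (fun j => u ∈ T j)).card = ∑ u ∈ U, 1 := by
          rw [h1, Finset.sum_const, smul_eq_mul, mul_one, hUcard]
          rw [Finset.sum_congr rfl fun j _ => hTcard j]
        have hge : ∀ u ∈ U, 1 ≤ (Finset.univ.filter (fun j => u ∈ T j)).card := by
          intro u hu
          obtain ⟨j, _, hj⟩ := Finset.mem_biUnion.mp hu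
          exact Finset.card_pos.mpr ⟨j, Finset.mem_filter.mpr ⟨Finset.mem_univ j, hj⟩⟩
        intro u hu
        exact ((Finset.sum_eq_sum_iff_of_le hge).mp h2.symm u hu).symm
      have hdisj : ∀ j j', j ≠ j' → ∀ t, t ∈ T j → t ∉ T j' := by
        intro j j' hne t htj htj'
        have h2le : ({j, j'} : Finset (Fin k)) ⊆ Finset.univ.filter (fun l => t ∈ T l) := by
          intro l hl
          rcases Finset.mem_insert.mp hl with h | h
          · exact Finset.mem_filter.mpr ⟨Finset.mem_univ l, h ▸ htj⟩
          · exact Finset.mem_filter.mpr ⟨Finset.mem_univ l, (Finset.mem_singleton.mp h) ▸ htj'⟩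
        have := (Finset.card_le_card h2le).trans_eq (hcount t (hTU j htj))
        rw [Finset.card_pair hne] at this
        omega
      have hchoice : ∀ j, (∏ i ∈ T j, a i) ∈ I j ∨
          ∃ t ∈ T j, (∏ x ∈ Finset.univ.erase t, a x) ∈ (I j).radical := by
        intro j
        obtain ⟨b, hbprod, hbcast, hberase⟩ :=
          tuple_of_finset a Finset.univ (T j) (Finset.subset_univ _) (hTcard j)
        have hb := (hprimary j).2 b (by rw [hbprod]; exact hle j hmem)
          (by rw [hbprod]; exact fun hc => hphi (hrev J (I j) (hle j) hc))
        rcases hb with h | ⟨i, hi⟩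
        · left; rwa [hbcast] at h
        · obtain ⟨t, htT, hteq⟩ := hberase i
          rw [hteq] at hi
          refine Or.inr ⟨t, htT, ?_⟩
          convert hi using 2
      by_cases hA : ∀ j, (∏ i ∈ T j, a i) ∈ I j
      · left
        have hpd : (↑(Finset.univ : Finset (Fin k)) : Set (Fin k)).PairwiseDisjoint T := by
          intro j _ j' _ hne
          exact Finset.disjoint_left.mpr fun {u} hu hu' => hdisj j j' hne u hu hu'
        have heqp : (∏ i : Fin n, a i.castSucc) = ∏ j, ∏ i ∈ T j, a i := by
          rw [← fin_prod_erase_last, ← hUeq, hU, Finset.prod_biUnion hpd]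
        rw [heqp]
        exact hmul _ fun j => hA j
      · push_neg at hA
        obtain ⟨j₀, hj₀⟩ := hA
        rcases hchoice j₀ with h | ⟨t, htT, htmem⟩
        · exact absurd h hj₀
        · right
          have htU : t ∈ U := hTU j₀ htT
          have htlast : t ≠ Fin.last n := by
            rw [hUeq] at htU; exact (Finset.mem_erase.mp htU).1
          obtain ⟨i', rfl⟩ := Fin.exists_castSucc_eq.mpr htlast
          refine ⟨i', hrad _ fun j => ?_⟩
          by_cases hj : j = j₀
          · subst hj; exact htmem
          · have hTj : T j ⊆ Finset.univ.erase i'.castSucc := by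
              intro u hu
              refine Finset.mem_erase.mpr ⟨fun h => ?_, Finset.mem_univ u⟩
              exact hdisj j₀ j (fun he => hj he.symm) _ htT (h ▸ hu)
            rw [← Finset.prod_sdiff hTj]
            exact Ideal.mul_mem_left _ _ (hTmem j)
    · push_neg at hcover
      obtain ⟨i, hilast, hiU⟩ := hcover
      obtain ⟨i', rfl⟩ := Fin.exists_castSucc_eq.mpr hilast
      right
      refine ⟨i', hrad _ fun j => ?_⟩
      have hTj : T j ⊆ Finset.univ.erase i'.castSucc := by
        intro u hu
        refine Finset.mem_erase.mpr ⟨fun h => ?_, Finset.mem_univ u⟩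
        exact hiU (hTU j (h ▸ hu))
      rw [← Finset.prod_sdiff hTj]
      exact Ideal.mul_mem_left _ _ (hTmem j)

end AuxPhiAbsorbing

/-- Theorem 2.8: if `φ` reverses inclusions and each `Iᵢ` is `φ`-`nᵢ`-absorbing
primary with `√Iᵢ` a `φ`-`nᵢ`-absorbing ideal, then the intersection and the
product of the `Iᵢ`'s are `φ`-`(n₁ + ⋯ + n_k)`-absorbing primary. -/
theorem stmt_2 {R : Type*} [CommRing R] [Nontrivial R] (k : ℕ) (hk : 0 < k)
    (φ : Ideal R → Ideal R) (hφ : ∀ J : Ideal R, φ J ≤ J)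
    (hrev : ∀ J K : Ideal R, J ≤ K → φ K ≤ φ J)
    (m : Fin k → ℕ) (hm : ∀ i, 0 < m i) (I : Fin k → Ideal R)
    (hprimary : ∀ i, IsPhiNAbsorbingPrimary φ (m i) (I i))
    (habs : ∀ i, IsPhiNAbsorbing φ (m i) (I i).radical) :
    IsPhiNAbsorbingPrimary φ (∑ i, m i) (⨅ i, I i) ∧
      IsPhiNAbsorbingPrimary φ (∑ i, m i) (∏ i, I i) := by
  constructor
  · refine core_lemma hk φ hrev m I hprimary habs _ (fun j => iInf_le I j) ?_ ?_
    · intro y hy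
      refine Submodule.mem_iInf _ |>.mpr fun j => ?_
      rw [← Finset.mul_prod_erase Finset.univ y (Finset.mem_univ j)]
      exact Ideal.mul_mem_right _ _ (hy j)
    · intro x hx
      choose c hc using fun j => Ideal.mem_radical_iff.mp (hx j)
      refine Ideal.mem_radical_iff.mpr ⟨∑ j, c j, Submodule.mem_iInf _ |>.mpr fun j => ?_⟩
      rw [← Finset.add_sum_erase Finset.univ c (Finset.mem_univ j), pow_add]
      exact Ideal.mul_mem_right _ _ (hc j)
  · refine core_lemma hk φ hrev m I hprimary habs _
      (fun j => le_trans Ideal.prod_le_inf (Finset.inf_le (Finset.mem_univ j))) ?_ ?_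
    · exact fun y hy => Ideal.prod_mem_prod fun j _ => hy j
    · intro x hx
      choose c hc using fun j => Ideal.mem_radical_iff.mp (hx j)
      refine Ideal.mem_radical_iff.mpr ⟨∑ j, c j, ?_⟩
      rw [← Finset.prod_pow_eq_pow_sum]
      exact Ideal.prod_mem_prod fun j _ => hc j
end

section
/- Let P₁, P₂, …, P_n be prime ideals of R and t₁, …, t_n positive integers such that for every 1 ≤ i ≤ n the power Pᵢ^{tᵢ} is a Pᵢ-primary ideal of R. Then P₁^{t₁} ∩ P₂^{t₂} ∩ ⋯ ∩ P_n^{t_n} and the product P₁^{t₁}P₂^{t₂}⋯P_n^{t_n} are n-absorbing primary ideals of R. In particular, P₁ ∩ P₂ ∩ ⋯ ∩ P_n and P₁P₂⋯P_n are n-absorbing primary ideals of R. -/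
/-- A proper ideal `I` is `n`-absorbing primary: whenever `a₁ ⋯ a_{n+1} ∈ I`,
either `a₁ ⋯ a_n ∈ I` or the product of `a_{n+1}` with `n - 1` of
`a₁, …, a_n` lies in `√I`. -/
def IsNAbsorbingPrimary {R : Type*} [CommRing R] (n : ℕ) (I : Ideal R) : Prop :=
  I ≠ ⊤ ∧ ∀ a : Fin (n + 1) → R,
    (∏ i, a i) ∈ I →
      ((∏ i : Fin n, a i.castSucc) ∈ I ∨
        ∃ i : Fin n, (∏ j ∈ Finset.univ.erase i.castSucc, a j) ∈ I.radical)

/-- Key lemma: if each `Q i` is primary and `∏ Q i ≤ J ≤ ⨅ Q i`, then `J` is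
`n`-absorbing primary. -/
lemma key_nabsorbing {R : Type*} [CommRing R] (n : ℕ) (hn : 0 < n)
    (Q : Fin n → Ideal R) (hQ : ∀ i, (Q i).IsPrimary)
    (J : Ideal R) (hJ1 : J ≤ ⨅ i, Q i) (hJ2 : (∏ i, Q i) ≤ J) :
    IsNAbsorbingPrimary n J := by
  have hQ' : ∀ i, ∀ {x y : R}, x * y ∈ Q i → x ∈ Q i ∨ y ∈ (Q i).radical :=
    fun i => (Ideal.isPrimary_iff.mp (hQ i)).2
  have hPr : ∀ i, ((Q i).radical).IsPrime := fun i => Ideal.isPrime_radical (hQ i)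
  have hQle : ∀ k, J ≤ Q k := fun k => hJ1.trans (iInf_le _ k)
  constructor
  · intro hT
    exact (Ideal.isPrimary_iff.mp (hQ ⟨0, hn⟩)).1 (top_le_iff.mp (hT ▸ hQle ⟨0, hn⟩))
  intro a ha
  by_cases hex : ∃ i : Fin n, (∏ j ∈ Finset.univ.erase i.castSucc, a j) ∈ J.radical
  · exact Or.inr hex
  push_neg at hex
  have hainQ : ∀ k, (∏ j, a j) ∈ Q k := fun k => hQle k ha
  -- elements in all radicals are in radical J
  have hradle : ∀ x : R, (∀ k, x ∈ (Q k).radical) → x ∈ J.radical := by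
    intro x hx
    choose m hm using hx
    exact ⟨∑ k, m k, hJ2 (by
      rw [← Finset.prod_pow_eq_pow_sum]
      exact Ideal.prod_mem_prod fun k _ => hm k)⟩
  have step : ∀ i : Fin n, ∃ k, ∀ j, j ≠ i.castSucc → a j ∉ (Q k).radical := by
    intro i
    by_contra hc
    push_neg at hc
    apply hex i
    apply hradle
    intro k
    obtain ⟨j, hj, hjk⟩ := hc k
    have hdvd : a j ∣ ∏ j ∈ Finset.univ.erase i.castSucc, a j :=
      Finset.dvd_prod_of_mem a (by simp [hj])
    obtain ⟨c, hc'⟩ := hdvd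
    rw [hc']
    exact Ideal.mul_mem_right _ _ hjk
  choose f hf using step
  have hfin : Function.Injective f := by
    intro i i' hii
    by_contra hne
    have hmem : ∃ j, a j ∈ (Q (f i)).radical := by
      have := Ideal.le_radical (hainQ (f i))
      have h2 := (Ideal.IsPrime.prod_mem_iff (hp := hPr (f i))).mp this
      obtain ⟨j, _, hj⟩ := h2
      exact ⟨j, hj⟩
    obtain ⟨j, hj⟩ := hmem
    rcases eq_or_ne j i.castSucc with rfl | hji
    · exact hf i' _ (fun h => hne (Fin.castSucc_injective n h)) (hii ▸ hj)
    · exact hf i j hji hj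
  have hbij : Function.Bijective f := (Finite.injective_iff_bijective).mp hfin
  let e : Fin n ≃ Fin n := Equiv.ofBijective f hbij
  -- b k := a ((e.symm k).castSucc) ∈ Q k
  have hb : ∀ k, a ((e.symm k).castSucc) ∈ Q k := by
    intro k
    have hfe : f (e.symm k) = k := e.apply_symm_apply k
    have hrest : (∏ j ∈ Finset.univ.erase (e.symm k).castSucc, a j) ∉ (Q k).radical := by
      intro hcon
      obtain ⟨j, hj, hj2⟩ := (Ideal.IsPrime.prod_mem_iff (hp := hPr k)).mp hcon
      exact hf (e.symm k) j (Finset.mem_erase.mp hj).1 (hfe.symm ▸ hj2)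
    have hsplit : a ((e.symm k).castSucc) * ∏ j ∈ Finset.univ.erase (e.symm k).castSucc, a j
        = ∏ j, a j := Finset.mul_prod_erase _ _ (Finset.mem_univ _)
    rcases hQ' k (hsplit ▸ hainQ k) with h | h
    · exact h
    · exact absurd h hrest
  left
  have heq : (∏ i : Fin n, a i.castSucc) = ∏ k, a ((e.symm k).castSucc) :=
    (Equiv.prod_comp e.symm (fun i => a i.castSucc)).symm
  rw [heq]
  exact hJ2 (Ideal.prod_mem_prod fun k _ => hb k)

/-- Corollary 2.9: if `P₁, …, Pₙ` are prime ideals and `Pᵢ^{tᵢ}` is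
`Pᵢ`-primary for each `i`, then `P₁^{t₁} ∩ ⋯ ∩ Pₙ^{tₙ}` and
`P₁^{t₁} ⋯ Pₙ^{tₙ}` are `n`-absorbing primary; in particular so are
`P₁ ∩ ⋯ ∩ Pₙ` and `P₁ ⋯ Pₙ`. -/
theorem stmt_3 {R : Type*} [CommRing R] [Nontrivial R] (n : ℕ) (hn : 0 < n)
    (P : Fin n → Ideal R) (hP : ∀ i, (P i).IsPrime)
    (t : Fin n → ℕ) (ht : ∀ i, 0 < t i)
    (hprimary : ∀ i, (P i ^ t i).IsPrimary ∧ (P i ^ t i).radical = P i) :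
    IsNAbsorbingPrimary n (⨅ i, P i ^ t i) ∧
      IsNAbsorbingPrimary n (∏ i, P i ^ t i) ∧
      IsNAbsorbingPrimary n (⨅ i, P i) ∧
      IsNAbsorbingPrimary n (∏ i, P i) := by
  have hle : ∀ Q : Fin n → Ideal R, (∏ i, Q i) ≤ ⨅ i, Q i := fun Q =>
    le_iInf fun k => Ideal.prod_le_inf.trans (Finset.inf_le (Finset.mem_univ k))
  refine ⟨key_nabsorbing n hn _ (fun i => (hprimary i).1) _ le_rfl (hle _),
    key_nabsorbing n hn _ (fun i => (hprimary i).1) _ (hle _) le_rfl,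
    key_nabsorbing n hn P (fun i => (hP i).isPrimary) _ le_rfl (hle _),
    key_nabsorbing n hn P (fun i => (hP i).isPrimary) _ (hle _) le_rfl⟩
end

section
/- Let n ≥ 2, let φ be a function from the set of ideals of R to itself, and let I be a proper ideal of R such that √(φ(√I)) ⊆ φ(I). If √I is a φ-(n−1)-absorbing ideal of R, then I is a φ-n-absorbing primary ideal of R. -/
private lemma hl2 {M : Type*} [CommMonoid M] (m : ℕ) (f : Fin (m+1) → M) :
    ∏ j ∈ Finset.univ.erase (Fin.last m), f j = ∏ j : Fin m, f j.castSucc := by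
  rw [Fin.univ_castSuccEmb, Finset.erase_cons, Finset.prod_map]
  rfl

private lemma hl1 {M : Type*} [CommMonoid M] (m : ℕ) (f : Fin (m+1) → M) (i : Fin m) :
    ∏ j ∈ Finset.univ.erase i.castSucc, f j
      = (∏ j ∈ Finset.univ.erase i, f j.castSucc) * f (Fin.last m) := by
  rw [Fin.univ_castSuccEmb,
    Finset.erase_cons_of_ne (by simp [Fin.ext_iff]; omega) (Fin.castSucc_lt_last i).ne',
    Finset.prod_cons, show i.castSucc = Fin.castSuccEmb i from rfl, ← Finset.map_erase,
    Finset.prod_map, mul_comm]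
  rfl

/-- Theorem 2.12: if `√(φ(√I)) ⊆ φ(I)` and `√I` is `φ`-`(n-1)`-absorbing,
then `I` is `φ`-`n`-absorbing primary. -/
theorem stmt_4 {R : Type*} [CommRing R] [Nontrivial R] (n : ℕ) (hn : 2 ≤ n)
    (φ : Ideal R → Ideal R) (hφ : ∀ J : Ideal R, φ J ≤ J) (I : Ideal R) (hI : I ≠ ⊤)
    (hcond : (φ I.radical).radical ≤ φ I)
    (habs : IsPhiNAbsorbing φ (n - 1) I.radical) :
    IsPhiNAbsorbingPrimary φ n I := by
  obtain ⟨n, rfl⟩ : ∃ m, n = m + 2 := ⟨n - 2, by omega⟩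
  refine ⟨hI, fun a ha hna => ?_⟩
  set b : Fin (n+2) → R := fun i =>
    if i = Fin.last (n+1) then a i.castSucc * a (Fin.last (n+2)) else a i.castSucc with hb
  have hbcs : ∀ j : Fin (n+1), b j.castSucc = a j.castSucc.castSucc := fun j => by
    simp [hb, (Fin.castSucc_lt_last j).ne]
  have hblast : b (Fin.last (n+1)) = a (Fin.last (n+1)).castSucc * a (Fin.last (n+2)) := by
    simp [hb]
  have hprod : ∏ i, b i = ∏ i, a i := by
    rw [Fin.prod_univ_castSucc (f := b), hblast, Fin.prod_univ_castSucc (f := a),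
      Fin.prod_univ_castSucc (f := fun i : Fin (n+2) => a i.castSucc)]
    simp only [hbcs]
    ring
  have h1 : (∏ i, b i) ∈ I.radical := hprod ▸ I.le_radical ha
  have h2 : (∏ i, b i) ∉ φ I.radical := fun h =>
    hna (hcond (Ideal.le_radical (hprod ▸ h)))
  have habs2 : IsPhiNAbsorbing φ (n+1) I.radical := habs
  obtain ⟨i, hi⟩ := habs2.2 b h1 h2
  right
  by_cases hil : i = Fin.last (n+1)
  · refine ⟨Fin.last (n+1), ?_⟩
    rw [hil, hl2] at hi
    simp only [hbcs] at hi
    rw [hl1, hl2]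
    exact Ideal.mul_mem_right _ _ hi
  · obtain ⟨k, rfl⟩ := Fin.exists_castSucc_eq.mpr hil
    refine ⟨k.castSucc, ?_⟩
    rw [hl1] at hi
    simp only [hbcs, hblast] at hi
    rw [hl1, hl1, mul_assoc]
    exact hi
end

section
/- Let I be a proper ideal of R. If √I = M₁ ∩ M₂ ∩ ⋯ ∩ M_n where M₁, …, M_n are maximal ideals of R, then I is an n-absorbing primary ideal of R. -/
/-- Theorem 2.15: if `√I = M₁ ∩ ⋯ ∩ Mₙ` with the `Mᵢ` maximal ideals, then
`I` is an `n`-absorbing primary ideal. -/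
theorem stmt_5 {R : Type*} [CommRing R] [Nontrivial R] (n : ℕ) (hn : 0 < n)
    (I : Ideal R) (hI : I ≠ ⊤) (M : Fin n → Ideal R) (hM : ∀ i, (M i).IsMaximal)
    (hrad : I.radical = ⨅ i, M i) :
    IsNAbsorbingPrimary n I := by
  refine ⟨hI, fun a ha => ?_⟩
  by_cases h : (∏ i : Fin n, a i.castSucc) ∈ I
  · exact Or.inl h
  right
  by_contra hcon
  push_neg at hcon
  apply h; clear h
  haveI hprime : ∀ m : Fin n, (M m).IsPrime := fun m => (hM m).isPrime
  -- the full product lies in every M m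
  have hfull : ∀ m : Fin n, (∏ i, a i) ∈ M m := fun m => by
    have hle : I.radical ≤ M m := hrad ▸ iInf_le M m
    exact hle (Ideal.le_radical ha)
  -- choose for each i a maximal ideal witnessing failure
  have key : ∀ i : Fin n, ∃ m : Fin n, ∀ k, k ≠ i.castSucc → a k ∉ M m := by
    intro i
    have hi := hcon i
    rw [hrad, Ideal.mem_iInf] at hi
    push_neg at hi
    obtain ⟨m, hm⟩ := hi
    refine ⟨m, fun k hk hak => hm ?_⟩
    have hkmem : k ∈ Finset.univ.erase i.castSucc := Finset.mem_erase.2 ⟨hk, Finset.mem_univ _⟩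
    rw [← Finset.mul_prod_erase _ _ hkmem]
    exact Ideal.mul_mem_right _ _ hak
  choose f hf using key
  -- a i.castSucc ∈ M (f i)
  have hmem : ∀ i : Fin n, a i.castSucc ∈ M (f i) := by
    intro i
    have := hfull (f i)
    rw [(hprime (f i)).prod_mem_iff] at this
    obtain ⟨k, _, hk⟩ := this
    rcases eq_or_ne k i.castSucc with rfl | hne
    · exact hk
    · exact absurd hk (hf i k hne)
  have hinj : Function.Injective f := by
    intro i i' hii
    by_contra hne
    exact hf i' i.castSucc (fun hc => hne (Fin.castSucc_injective n hc)) (hii ▸ hmem i)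
  have hsurj : Function.Surjective f := Finite.surjective_of_injective hinj
  -- the last factor lies in no M m
  have hlast : ∀ m : Fin n, a (Fin.last n) ∉ M m := by
    intro m
    obtain ⟨i, rfl⟩ := hsurj m
    exact hf i (Fin.last n) (Fin.castSucc_lt_last i).ne'
  -- hence radical I + (a_last) = ⊤
  have htop : I.radical ⊔ Ideal.span {a (Fin.last n)} = ⊤ := by
    by_contra hne
    obtain ⟨Mx, hMx, hle⟩ := Ideal.exists_le_maximal _ hne
    have h1 : (⨅ i, M i) ≤ Mx := by
      calc (⨅ i, M i) = I.radical := hrad.symm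
        _ ≤ _ := le_sup_left.trans hle
    have h2 : Finset.univ.inf M ≤ Mx := by
      rw [Finset.inf_eq_iInf]; simpa using h1
    obtain ⟨m, _, hm⟩ := (hMx.isPrime.inf_le' ).1 h2
    have : M m = Mx := ((hM m).eq_of_le hMx.ne_top hm)
    refine hlast m ?_
    rw [this]
    exact (le_sup_right.trans hle) (Ideal.mem_span_singleton_self _)
  -- write 1 = r + a_last * x with r in radical
  rw [Ideal.eq_top_iff_one, Submodule.mem_sup] at htop
  obtain ⟨r, hr, y, hy, hry⟩ := htop
  obtain ⟨x, rfl⟩ := Ideal.mem_span_singleton'.1 hy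
  obtain ⟨m, hrm⟩ := hr
  -- (r + x * a_last)^m = r^m + a_last * c
  have hd : a (Fin.last n) ∣ (r + x * a (Fin.last n)) ^ m - r ^ m := by
    have := sub_dvd_pow_sub_pow (r + x * a (Fin.last n)) r m
    have h2 : a (Fin.last n) ∣ (r + x * a (Fin.last n)) - r := ⟨x, by ring⟩
    exact h2.trans this
  obtain ⟨c, hc⟩ := hd
  have hpow : (r + x * a (Fin.last n)) ^ m = r ^ m + a (Fin.last n) * c := by
    rw [← hc]; ring
  have hone : (r + x * a (Fin.last n)) ^ m = 1 := by rw [hry, one_pow]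
  have hprodall : (∏ i : Fin n, a i.castSucc) * a (Fin.last n) ∈ I := by
    rw [← Fin.prod_univ_castSucc]; exact ha
  have heq : (∏ i : Fin n, a i.castSucc)
      = (∏ i : Fin n, a i.castSucc) * r ^ m
        + ((∏ i : Fin n, a i.castSucc) * a (Fin.last n)) * c := by
    conv_lhs => rw [← mul_one (∏ i : Fin n, a i.castSucc), ← hone, hpow]
    ring
  rw [heq]
  exact I.add_mem (I.mul_mem_left _ hrm) (I.mul_mem_right _ hprodall)
end

section
/- Let R be a Noetherian integral domain with 1 ≠ 0 that is not a field, and let n be a positive integer. Then R is a Dedekind domain if and only if the following holds: a nonzero proper ideal I of R is an n-absorbing primary ideal of R if and only if I = M₁^{t₁}M₂^{t₂}⋯M_i^{t_i} for some 1 ≤ i ≤ n, some distinct maximal ideals M₁, M₂, …, M_i of R and some positive integers t₁, t₂, …, t_i. -/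
open UniqueFactorizationMonoid

section Helpers

variable {R : Type*} [CommRing R]

theorem isNAbsorbingPrimary_of_isPrimary {n : ℕ} (hn : 0 < n)
    {I : Ideal R} (hI : I.IsPrimary) : IsNAbsorbingPrimary n I := by
  obtain ⟨hTop, hPrim⟩ := Ideal.isPrimary_iff.mp hI
  refine ⟨hTop, fun a ha => ?_⟩
  rw [Fin.prod_univ_castSucc] at ha
  rcases hPrim ha with h | h
  · exact Or.inl h
  · refine Or.inr ⟨⟨0, hn⟩, ?_⟩
    have hmem : Fin.last n ∈ Finset.univ.erase (Fin.castSucc ⟨0, hn⟩) :=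
      Finset.mem_erase.mpr ⟨by simp [Fin.ext_iff]; omega, Finset.mem_univ _⟩
    rw [← Finset.mul_prod_erase _ _ hmem]
    exact Ideal.mul_mem_right _ _ h

theorem mem_radical_prod_pow {ι : Type*} [Fintype ι] {M : ι → Ideal R} {t : ι → ℕ}
    {x : R} (hx : ∀ j, x ∈ M j) : x ∈ (∏ j, M j ^ t j).radical :=
  Ideal.mem_radical_iff.mpr ⟨∑ j, t j, by
    rw [← Finset.prod_pow_eq_pow_sum]
    exact Ideal.prod_mem_prod fun j _ => Ideal.pow_mem_pow (hx j) _⟩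

/-- An element in a (product of) power(s) of maximal ideals which is `1` modulo each ideal
in a finite set of other maximal ideals. -/
theorem exists_mem_prod_pow_sub_one_mem (U T : Finset (Ideal R)) (cexp : Ideal R → ℕ)
    (hU : ∀ P ∈ U, P.IsMaximal) (hT : ∀ Q ∈ T, Q.IsMaximal) (hUT : ∀ Q ∈ T, Q ∉ U) :
    ∃ y, y ∈ (∏ P ∈ U, P ^ cexp P) ∧ ∀ Q ∈ T, 1 - y ∈ Q := by
  have hcop : IsCoprime (∏ P ∈ U, P ^ cexp P) (∏ Q ∈ T, Q) := by
    apply IsCoprime.prod_left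
    intro P hP
    apply IsCoprime.pow_left
    apply IsCoprime.prod_right
    intro Q hQ
    exact Ideal.isCoprime_iff_sup_eq.mpr
      ((hU P hP).coprime_of_ne (hT Q hQ) (fun e => hUT Q hQ (e ▸ hP)))
  rw [Ideal.isCoprime_iff_sup_eq] at hcop
  obtain ⟨u, hu, v, hv, huv⟩ :=
    Submodule.mem_sup.mp (hcop ▸ Submodule.mem_top : (1 : R) ∈ _ ⊔ _)
  refine ⟨u, hu, fun Q hQ => ?_⟩
  have hvQ : v ∈ Q := Ideal.prod_le_inf.trans (Finset.inf_le hQ) hv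
  have : (1 : R) - u = v := by rw [← huv]; ring
  rw [this]
  exact hvQ

end Helpers

section Dedekind

variable {R : Type*} [CommRing R] [IsDomain R] [IsDedekindDomain R]

theorem mem_pow_iff_le_count [DecidableEq (Ideal R)] {M : Ideal R} (hM : M.IsMaximal)
    (hM0 : M ≠ ⊥) {x : R} (hx : x ≠ 0) (t : ℕ) :
    x ∈ M ^ t ↔ t ≤ (normalizedFactors (Ideal.span {x})).count M := by
  have hprime : Prime M := Ideal.prime_of_isPrime hM0 hM.isPrime
  have hspan : Ideal.span {x} ≠ ⊥ := by simpa [Ideal.span_singleton_eq_bot] using hx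
  have key : normalizedFactors (M ^ t) = Multiset.replicate t M := by
    rw [normalizedFactors_pow, normalizedFactors_irreducible hprime.irreducible, normalize_eq,
      Multiset.nsmul_singleton]
  rw [← Ideal.span_singleton_le_iff_mem, ← Ideal.dvd_iff_le,
    dvd_iff_normalizedFactors_le_normalizedFactors (pow_ne_zero t hprime.ne_zero) hspan, key,
    ← Multiset.le_count_iff_replicate_le]

theorem count_span_prod {ι : Type*} [DecidableEq (Ideal R)] (s : Finset ι) (a : ι → R)
    (ha : ∀ k ∈ s, a k ≠ 0) (M : Ideal R) :
    (normalizedFactors (Ideal.span {∏ k ∈ s, a k})).count M =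
      ∑ k ∈ s, (normalizedFactors (Ideal.span {a k})).count M := by
  classical
  induction s using Finset.induction_on with
  | empty => simp [Ideal.span_singleton_one, ← Ideal.one_eq_top]
  | @insert k s hk ih =>
    have h1 : Ideal.span {a k} ≠ ⊥ := by
      simpa [Ideal.span_singleton_eq_bot] using ha k (Finset.mem_insert_self _ _)
    have h2 : Ideal.span {∏ k' ∈ s, a k'} ≠ ⊥ := by
      simp only [ne_eq, Ideal.span_singleton_eq_bot]
      exact Finset.prod_ne_zero_iff.mpr fun k' hk' => ha k' (Finset.mem_insert_of_mem hk')
    rw [Finset.prod_insert hk, Finset.sum_insert hk, ← Ideal.span_singleton_mul_span_singleton,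
      normalizedFactors_mul h1 h2, Multiset.count_add,
      ih fun k' hk' => ha k' (Finset.mem_insert_of_mem hk')]

theorem mem_prod_pow_iff [DecidableEq (Ideal R)] {i : ℕ} {M : Fin i → Ideal R}
    (hMmax : ∀ j, (M j).IsMaximal) (hM0 : ∀ j, M j ≠ ⊥) (hinj : Function.Injective M)
    (t : Fin i → ℕ) {x : R} (hx : x ≠ 0) :
    (x ∈ ∏ j, M j ^ t j) ↔ ∀ j, t j ≤ (normalizedFactors (Ideal.span {x})).count (M j) := by
  have hprime : ∀ j, Prime (M j) := fun j => Ideal.prime_of_isPrime (hM0 j) (hMmax j).isPrime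
  have hspan : Ideal.span {x} ≠ ⊥ := by simpa [Ideal.span_singleton_eq_bot] using hx
  constructor
  · intro h j
    exact (mem_pow_iff_le_count (hMmax j) (hM0 j) hx _).mp
      ((Ideal.prod_le_inf.trans (Finset.inf_le (Finset.mem_univ j))) h)
  · intro h
    have hne : (∏ j, M j ^ t j) ≠ 0 :=
      Finset.prod_ne_zero_iff.mpr fun j _ => pow_ne_zero _ (hprime j).ne_zero
    have hnf : normalizedFactors (∏ j, M j ^ t j) = ∑ j, Multiset.replicate (t j) (M j) := by
      have hprod : (∑ j, Multiset.replicate (t j) (M j)).prod = ∏ j, M j ^ t j := by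
        rw [Multiset.prod_sum]
        exact Finset.prod_congr rfl fun j _ => Multiset.prod_replicate _ _
      rw [← hprod]
      apply normalizedFactors_prod_of_prime
      intro p hp
      rw [Multiset.mem_sum] at hp
      obtain ⟨j, -, hj⟩ := hp
      rw [Multiset.eq_of_mem_replicate hj]
      exact hprime j
    rw [← Ideal.span_singleton_le_iff_mem, ← Ideal.dvd_iff_le,
      dvd_iff_normalizedFactors_le_normalizedFactors hne hspan, hnf, Multiset.le_iff_count]
    intro P
    rw [Multiset.count_sum']
    by_cases hP : ∃ j, P = M j
    · obtain ⟨j, rfl⟩ := hP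
      have : ∑ j', Multiset.count (M j) (Multiset.replicate (t j') (M j')) = t j := by
        rw [Finset.sum_eq_single j]
        · simp [Multiset.count_replicate]
        · intro j' _ hj'
          rw [Multiset.count_replicate, if_neg fun h => hj' (hinj h)]
        · simp
      rw [this]
      exact h j
    · push_neg at hP
      have : ∑ j', Multiset.count P (Multiset.replicate (t j') (M j')) = 0 :=
        Finset.sum_eq_zero fun j' _ => by
          rw [Multiset.count_replicate, if_neg fun h => hP j' h.symm]
      rw [this]
      exact Nat.zero_le _

theorem isNAbsorbingPrimary_of_eq_prod [DecidableEq (Ideal R)] (hnf : ¬IsField R) {n i : ℕ}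
    (hn : 0 < n) (hin : i ≤ n) {M : Fin i → Ideal R} {t : Fin i → ℕ}
    (hMmax : ∀ j, (M j).IsMaximal) (hinj : Function.Injective M) (ht : ∀ j, 0 < t j)
    (hItop : (∏ j, M j ^ t j) ≠ ⊤) :
    IsNAbsorbingPrimary n (∏ j, M j ^ t j) := by
  have hM0 : ∀ j, M j ≠ ⊥ := fun j => Ring.ne_bot_of_isMaximal_of_not_isField (hMmax j) hnf
  refine ⟨hItop, fun a ha => ?_⟩
  by_cases hz : ∀ k, a k ≠ 0
  swap
  · push_neg at hz
    obtain ⟨k, hk⟩ := hz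
    rcases Fin.eq_castSucc_or_eq_last k with ⟨k', rfl⟩ | rfl
    · exact Or.inl (by
        rw [Finset.prod_eq_zero (Finset.mem_univ k') hk]
        exact (∏ j, M j ^ t j).zero_mem)
    · refine Or.inr ⟨⟨0, hn⟩, ?_⟩
      have hmem : Fin.last n ∈ Finset.univ.erase (Fin.castSucc ⟨0, hn⟩) :=
        Finset.mem_erase.mpr ⟨by simp [Fin.ext_iff]; omega, Finset.mem_univ _⟩
      rw [Finset.prod_eq_zero hmem hk]
      exact (Ideal.radical _).zero_mem
  · set c : Fin i → Fin (n + 1) → ℕ :=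
      fun j k => (normalizedFactors (Ideal.span {a k})).count (M j) with hc
    have hmem_iff : ∀ j k, a k ∈ M j ↔ 1 ≤ c j k := fun j k => by
      simpa using mem_pow_iff_le_count (hMmax j) (hM0 j) (hz k) 1
    have htot : ∀ j, t j ≤ ∑ k, c j k := by
      intro j
      have h1 := (mem_prod_pow_iff hMmax hM0 hinj t
        (Finset.prod_ne_zero_iff.mpr fun k _ => hz k)).mp ha j
      rwa [count_span_prod Finset.univ a (fun k _ => hz k)] at h1
    by_cases hR : ∃ i0 : Fin n, ∀ j, ∃ k ∈ Finset.univ.erase i0.castSucc, a k ∈ M j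
    · obtain ⟨i0, hi0⟩ := hR
      refine Or.inr ⟨i0, mem_radical_prod_pow fun j => ?_⟩
      obtain ⟨k, hk, hak⟩ := hi0 j
      rw [← Finset.mul_prod_erase _ _ hk]
      exact Ideal.mul_mem_right _ _ hak
    · push_neg at hR
      choose g hg using hR
      have hzero : ∀ i0, ∀ k ∈ Finset.univ.erase (Fin.castSucc i0), c (g i0) k = 0 := by
        intro i0 k hk
        have h1 := hg i0 k hk
        rw [hmem_iff] at h1
        omega
      have hglast : ∀ i0, c (g i0) (Fin.last n) = 0 := fun i0 =>
        hzero i0 _ (Finset.mem_erase.mpr ⟨by simp [Fin.ext_iff]; omega, Finset.mem_univ _⟩)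
      have hlast : ∀ j, c j (Fin.last n) = 0 := by
        by_contra h
        push_neg at h
        obtain ⟨j₀, hj₀⟩ := h
        have hne : ∀ i0, g i0 ≠ j₀ := fun i0 e => hj₀ (by rw [← e]; exact hglast i0)
        have hginj : Function.Injective g := by
          intro i0 i0' he
          by_contra hne'
          have hzero' : ∀ k, c (g i0) k = 0 := by
            intro k
            by_cases hk : k = Fin.castSucc i0
            · subst hk
              rw [he]
              exact hzero i0' _ (Finset.mem_erase.mpr
                ⟨fun e => hne' (Fin.castSucc_injective _ e), Finset.mem_univ _⟩)
            · exact hzero i0 _ (Finset.mem_erase.mpr ⟨hk, Finset.mem_univ _⟩)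
          have h2 := htot (g i0)
          rw [Finset.sum_eq_zero fun k _ => hzero' k] at h2
          have := ht (g i0)
          omega
        have hsub : Finset.univ.image g ⊆ Finset.univ.erase j₀ := by
          intro j hj
          obtain ⟨i0, -, rfl⟩ := Finset.mem_image.mp hj
          exact Finset.mem_erase.mpr ⟨hne i0, Finset.mem_univ _⟩
        have hcard := Finset.card_le_card hsub
        rw [Finset.card_image_of_injective _ hginj, Finset.card_univ, Fintype.card_fin,
          Finset.card_erase_of_mem (Finset.mem_univ _), Finset.card_univ, Fintype.card_fin]
          at hcard
        omega
      refine Or.inl ?_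
      rw [mem_prod_pow_iff hMmax hM0 hinj t
        (Finset.prod_ne_zero_iff.mpr fun k _ => hz k.castSucc)]
      intro j
      rw [count_span_prod Finset.univ (fun k : Fin n => a k.castSucc) (fun k _ => hz _)]
      have h2 := htot j
      rw [Fin.sum_univ_castSucc, hlast j, add_zero] at h2
      exact h2

theorem eq_prod_of_isNAbsorbingPrimary (hnf : ¬IsField R) {n : ℕ}
    (hn : 0 < n) {I : Ideal R} (hI0 : I ≠ ⊥) (hItop : I ≠ ⊤) (hI : IsNAbsorbingPrimary n I) :
    ∃ i, 1 ≤ i ∧ i ≤ n ∧ ∃ (M : Fin i → Ideal R) (t : Fin i → ℕ),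
      (∀ j, (M j).IsMaximal) ∧ Function.Injective M ∧ (∀ j, 0 < t j) ∧ I = ∏ j, M j ^ t j := by
  classical
  set s := (normalizedFactors I).toFinset with hs
  have hprime : ∀ P ∈ s, Prime P := fun P hP =>
    prime_of_normalized_factor P (Multiset.mem_toFinset.mp hP)
  have hmax : ∀ P ∈ s, Ideal.IsMaximal P := fun P hP =>
    Ideal.IsPrime.isMaximal (Ideal.isPrime_of_prime (hprime P hP)) (hprime P hP).ne_zero
  have hassoc : (normalizedFactors I).prod = I :=
    associated_iff_eq.mp (prod_normalizedFactors hI0)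
  have hProdI : I = ∏ P ∈ s, P ^ (normalizedFactors I).count P := by
    conv_lhs => rw [← hassoc]
    exact Finset.prod_multiset_count _
  have hsne : s.Nonempty := by
    rw [Finset.nonempty_iff_ne_empty]
    intro he
    apply hItop
    rw [hs, Multiset.toFinset_eq_empty] at he
    rw [← hassoc, he, Multiset.prod_zero, Ideal.one_eq_top]
  have hIle : ∀ P ∈ s, I ≤ P := by
    intro P hP
    calc I = ∏ P ∈ s, P ^ (normalizedFactors I).count P := hProdI
    _ ≤ P ^ (normalizedFactors I).count P := Ideal.prod_le_inf.trans (Finset.inf_le hP)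
    _ ≤ P := Ideal.pow_le_self (Multiset.count_ne_zero.mpr (Multiset.mem_toFinset.mp hP))
  have hcard : s.card ≤ n := by
    by_contra hlt
    push_neg at hlt
    -- pick n+1 distinct elements of s
    have hcast : ∀ k : Fin (n + 1), (k : ℕ) < s.card := fun k => lt_of_lt_of_le k.2 hlt
    set Q : Fin (n + 1) → Ideal R := fun k => (s.equivFin.symm ⟨k, hcast k⟩ : Ideal R) with hQdef
    have hQs : ∀ k, Q k ∈ s := fun k => (s.equivFin.symm ⟨k, hcast k⟩).2
    have hQinj : Function.Injective Q := by
      intro k k' h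
      have := s.equivFin.symm.injective (Subtype.ext h)
      simpa [Fin.ext_iff] using congrArg Fin.val this
    -- choose the elements x k
    have hx : ∀ k : Fin n, ∃ x, (x ∈ ∏ P ∈ ({Q k.castSucc} : Finset (Ideal R)),
        P ^ (normalizedFactors I).count P) ∧ ∀ P ∈ s.erase (Q k.castSucc), 1 - x ∈ P := by
      intro k
      apply exists_mem_prod_pow_sub_one_mem
      · intro P hP
        rw [Finset.mem_singleton] at hP
        exact hP ▸ hmax _ (hQs _)
      · exact fun P hP => hmax P (Finset.mem_of_mem_erase hP)
      · intro P hP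
        rw [Finset.mem_singleton]
        exact (Finset.mem_erase.mp hP).1
    choose x hx1 hx2 using hx
    have hx1' : ∀ k : Fin n, x k ∈ (Q k.castSucc) ^ (normalizedFactors I).count (Q k.castSucc) :=
      fun k => by simpa using hx1 k
    set T : Finset (Ideal R) := Finset.image (fun k : Fin n => Q k.castSucc) Finset.univ with hT
    have hTs : T ⊆ s := by
      intro P hP
      obtain ⟨k, -, rfl⟩ := Finset.mem_image.mp hP
      exact hQs _
    have hy : ∃ y, (y ∈ ∏ P ∈ s \ T, P ^ (normalizedFactors I).count P) ∧
        ∀ P ∈ T, 1 - y ∈ P := by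
      apply exists_mem_prod_pow_sub_one_mem
      · exact fun P hP => hmax P (Finset.mem_sdiff.mp hP).1
      · exact fun P hP => hmax P (hTs hP)
      · exact fun P hP h => (Finset.mem_sdiff.mp h).2 hP
    obtain ⟨y, hy1, hy2⟩ := hy
    set a : Fin (n + 1) → R := Fin.lastCases y x with ha
    have halast : a (Fin.last n) = y := Fin.lastCases_last
    have hacast : ∀ k : Fin n, a k.castSucc = x k := fun k => Fin.lastCases_castSucc k
    -- the product of the a's lies in I
    have hmemI : (∏ k, a k) ∈ I := by
      rw [hProdI, ← Finset.prod_sdiff hTs, Fin.prod_univ_castSucc, halast]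
      have h1 : (∏ k : Fin n, a k.castSucc) ∈ ∏ P ∈ T, P ^ (normalizedFactors I).count P := by
        rw [hT, Finset.prod_image (fun k _ k' _ h => Fin.castSucc_injective _ (hQinj h))]
        exact Ideal.prod_mem_prod fun k _ => (hacast k) ▸ hx1' k
      rw [mul_comm (∏ P ∈ s \ T, P ^ (normalizedFactors I).count P) _]
      exact Ideal.mul_mem_mul h1 hy1
    -- helper facts about non-membership
    have hQlast_mem : Q (Fin.last n) ∈ s := hQs _
    have hQlast_not_T : Q (Fin.last n) ∉ T := by
      intro h
      obtain ⟨k, -, hk⟩ := Finset.mem_image.mp h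
      have := hQinj hk
      simp [Fin.ext_iff] at this
      omega
    rcases hI.2 a hmemI with hL | ⟨i0, hR⟩
    · -- first product in I: contradiction at Q (last)
      have h1 : (∏ k : Fin n, a k.castSucc) ∈ Q (Fin.last n) := hIle _ hQlast_mem hL
      have h2 := (Ideal.IsPrime.prod_mem_iff (hp := (hmax _ hQlast_mem).isPrime)).mp h1
      obtain ⟨k, -, hk⟩ := h2
      rw [hacast k] at hk
      have hne : Q (Fin.last n) ∈ s.erase (Q k.castSucc) := Finset.mem_erase.mpr
        ⟨fun e => by have := hQinj e; simp [Fin.ext_iff] at this; omega, hQlast_mem⟩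
      have h3 := hx2 k _ hne
      have : (1 : R) ∈ Q (Fin.last n) := by
        have := Ideal.add_mem _ hk h3
        simpa using this
      exact (hmax _ hQlast_mem).ne_top (Ideal.eq_top_of_isUnit_mem _ this isUnit_one)
    · -- omitted product in radical: contradiction at Q i0.castSucc
      set P0 := Q i0.castSucc with hP0def
      have hP0s : P0 ∈ s := hQs _
      have hradle : I.radical ≤ P0 := by
        have := Ideal.radical_mono (hIle _ hP0s)
        rwa [(hmax _ hP0s).isPrime.radical] at this
      have h1 : (∏ j ∈ Finset.univ.erase i0.castSucc, a j) ∈ P0 := hradle hR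
      have h2 := (Ideal.IsPrime.prod_mem_iff (hp := (hmax _ hP0s).isPrime)).mp h1
      obtain ⟨k, hk_mem, hk⟩ := h2
      have hk_ne : k ≠ i0.castSucc := (Finset.mem_erase.mp hk_mem).1
      have hone : (1 : R) ∈ P0 := by
        rcases Fin.eq_castSucc_or_eq_last k with ⟨k', rfl⟩ | rfl
        · -- k = castSucc k', k' ≠ i0
          rw [hacast k'] at hk
          have hne : P0 ∈ s.erase (Q k'.castSucc) := Finset.mem_erase.mpr
            ⟨fun e => hk_ne (congrArg Fin.castSucc (Fin.castSucc_injective _ (hQinj e)).symm),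
              hP0s⟩
          have h3 := hx2 k' _ hne
          have := Ideal.add_mem _ hk h3
          simpa using this
        · rw [halast] at hk
          have hP0T : P0 ∈ T := Finset.mem_image.mpr ⟨i0, Finset.mem_univ _, rfl⟩
          have h3 := hy2 _ hP0T
          have := Ideal.add_mem _ hk h3
          simpa using this
      exact (hmax _ hP0s).ne_top (Ideal.eq_top_of_isUnit_mem _ hone isUnit_one)
  -- now build the data
  refine ⟨s.card, Finset.card_pos.mpr hsne, hcard,
    fun j => (s.equivFin.symm j : Ideal R),
    fun j => (normalizedFactors I).count (s.equivFin.symm j : Ideal R),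
    fun j => hmax _ (s.equivFin.symm j).2, ?_,
    fun j => Multiset.count_pos.mpr (Multiset.mem_toFinset.mp (s.equivFin.symm j).2), ?_⟩
  · intro j j' h
    exact s.equivFin.symm.injective (Subtype.ext h)
  · have heq : ∏ P ∈ s, P ^ (normalizedFactors I).count P =
        ∏ j : Fin s.card, (s.equivFin.symm j : Ideal R) ^
          (normalizedFactors I).count (s.equivFin.symm j : Ideal R) := by
      rw [← Finset.prod_coe_sort s (fun P => P ^ (normalizedFactors I).count P)]
      exact (Equiv.prod_comp s.equivFin.symm
        (fun P : s => (P : Ideal R) ^ (normalizedFactors I).count (P : Ideal R))).symm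
    conv_lhs => rw [hProdI]
    exact heq

end Dedekind

/-- Theorem 2.17: a Noetherian domain `R` that is not a field is a Dedekind
domain iff a nonzero proper ideal `I` of `R` is `n`-absorbing primary exactly
when `I = M₁^{t₁} ⋯ Mᵢ^{tᵢ}` for some `1 ≤ i ≤ n`, distinct maximal ideals
`M₁, …, Mᵢ` and positive integers `t₁, …, tᵢ`. -/
theorem stmt_6 {R : Type*} [CommRing R] [IsDomain R] [IsNoetherianRing R]
    (hnf : ¬ IsField R) (n : ℕ) (hn : 0 < n) :
    IsDedekindDomain R ↔
      ∀ I : Ideal R, I ≠ ⊥ → I ≠ ⊤ →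
        (IsNAbsorbingPrimary n I ↔
          ∃ (i : ℕ), 1 ≤ i ∧ i ≤ n ∧
            ∃ (M : Fin i → Ideal R) (t : Fin i → ℕ),
              (∀ j, (M j).IsMaximal) ∧ Function.Injective M ∧
                (∀ j, 0 < t j) ∧ I = ∏ j, M j ^ t j) := by
  classical
  constructor
  · intro hDD
    haveI := hDD
    intro I hI0 hItop
    constructor
    · exact fun h => eq_prod_of_isNAbsorbingPrimary hnf hn hI0 hItop h
    · rintro ⟨i, h1i, hin, M, t, hMmax, hMinj, ht, rfl⟩
      exact isNAbsorbingPrimary_of_eq_prod hnf hn hin hMmax hMinj ht hItop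
  · intro H
    -- every nonzero prime is maximal
    have hdim : ∀ P : Ideal R, P ≠ ⊥ → P.IsPrime → P.IsMaximal := by
      intro P hP0 hPp
      have habs : IsNAbsorbingPrimary n P := isNAbsorbingPrimary_of_isPrimary hn hPp.isPrimary
      obtain ⟨i, h1i, hin, M, t, hMmax, hMinj, ht, hPeq⟩ := (H P hP0 hPp.ne_top).mp habs
      obtain ⟨j, -, hj⟩ := (hPp.prod_le).mp (le_of_eq hPeq.symm)
      have hle : M j ≤ P := hPp.le_of_pow_le hj
      exact ((hMmax j).eq_of_le hPp.ne_top hle) ▸ hMmax j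
    -- the localization at each nonzero prime is a DVR
    have hdvr : ∀ P : Ideal R, P ≠ ⊥ → ∀ hPp : P.IsPrime, IsDiscreteValuationRing
        (Localization.AtPrime P) := by
      intro P hP0 hPp
      set L := Localization.AtPrime P with hL
      haveI : IsNoetherianRing L := IsLocalization.isNoetherianRing P.primeCompl L inferInstance
      have hinjL : Function.Injective (algebraMap R L) :=
        IsLocalization.injective L P.primeCompl_le_nonZeroDivisors
      have key : ∀ J : Ideal L, J ≠ ⊥ → ∃ m : ℕ, J = (IsLocalRing.maximalIdeal L) ^ m := by
        intro J hJ0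
        by_cases hJtop : J = ⊤
        · exact ⟨0, by rw [hJtop, pow_zero, Ideal.one_eq_top]⟩
        have hrad : J.radical = IsLocalRing.maximalIdeal L := by
          rw [Ideal.radical_eq_sInf]
          apply le_antisymm
          · exact sInf_le ⟨IsLocalRing.le_maximalIdeal hJtop,
              Ideal.IsMaximal.isPrime (IsLocalRing.maximalIdeal.isMaximal L)⟩
          · apply le_sInf
            rintro q ⟨hJq, hq⟩
            have hq0 : q ≠ ⊥ := fun e => hJ0 (le_bot_iff.mp (e ▸ hJq))
            have hcq : (Ideal.comap (algebraMap R L) q).IsPrime := hq.comap _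
            have hcq0 : Ideal.comap (algebraMap R L) q ≠ ⊥ := by
              intro e
              apply hq0
              have h2 := IsLocalization.map_comap P.primeCompl L q
              rw [Ideal.under_def, e, Ideal.map_bot] at h2
              exact h2.symm
            have hPb : Ideal.comap (algebraMap R L) (IsLocalRing.maximalIdeal L) = P :=
              Localization.AtPrime.comap_maximalIdeal
            have hcqP : Ideal.comap (algebraMap R L) q ≤ P :=
              (Ideal.comap_mono (IsLocalRing.le_maximalIdeal hq.ne_top)).trans (le_of_eq hPb)
            have hqP : Ideal.comap (algebraMap R L) q = P :=
              (hdim _ hcq0 hcq).eq_of_le hPp.ne_top hcqP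
            have hqm : q = IsLocalRing.maximalIdeal L := by
              conv_lhs => rw [← IsLocalization.map_comap P.primeCompl L q]
              rw [Ideal.under_def, hqP, Localization.AtPrime.map_eq_maximalIdeal]
            exact le_of_eq hqm.symm
        have hJprim : J.IsPrimary := Ideal.isPrimary_of_isMaximal_radical
          (by rw [hrad]; exact IsLocalRing.maximalIdeal.isMaximal L)
        set Q := Ideal.comap (algebraMap R L) J with hQdef
        have hQtop : Q ≠ ⊤ := by
          intro e
          apply hJtop
          rw [Ideal.eq_top_iff_one] at e ⊢
          have h2 := Ideal.mem_comap.mp e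
          rwa [map_one] at h2
        have hQprim : Q.IsPrimary := by
          rw [Ideal.isPrimary_iff] at hJprim ⊢
          refine ⟨hQtop, ?_⟩
          intro x y hxy
          have h2 : algebraMap R L x * algebraMap R L y ∈ J := by
            rw [← map_mul]; exact hxy
          rcases hJprim.2 h2 with h | h
          · exact Or.inl h
          · right
            rw [← Ideal.comap_radical]
            exact h
        have hQ0 : Q ≠ ⊥ := by
          obtain ⟨z, hzJ, hz0⟩ := (Submodule.ne_bot_iff J).mp hJ0
          obtain ⟨⟨r, m⟩, hrm⟩ := IsLocalization.surj P.primeCompl z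
          refine (Submodule.ne_bot_iff Q).mpr ⟨r, ?_, ?_⟩
          · show algebraMap R L r ∈ J
            rw [← hrm]
            exact Ideal.mul_mem_right _ _ hzJ
          · intro e
            apply hz0
            have hmne : (m : R) ≠ 0 := fun e => m.2 (by rw [e]; exact P.zero_mem)
            have hm0 : algebraMap R L (m : R) ≠ 0 := fun e' =>
              hmne (hinjL (by rw [e', map_zero]))
            have : z * algebraMap R L (m : R) = 0 := by rw [hrm, e, map_zero]
            rcases mul_eq_zero.mp this with h | h
            · exact h
            · exact absurd h hm0
        obtain ⟨i, h1i, hin, M, t, hMmax, hMinj, ht, hQeq⟩ :=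
          (H Q hQ0 hQtop).mp (isNAbsorbingPrimary_of_isPrimary hn hQprim)
        have hradQ : Q.radical = P := by
          rw [hQdef, ← Ideal.comap_radical, hrad, ← Ideal.under_def, Localization.AtPrime.comap_maximalIdeal]
        have hPmax : P.IsMaximal := hdim P hP0 hPp
        have hMP : ∀ j, M j = P := by
          intro j
          have h1 : Q.radical ≤ M j := by
            have h2 : Q ≤ M j ^ t j := hQeq ▸ (Ideal.prod_le_inf.trans
              (Finset.inf_le (Finset.mem_univ j)))
            have h3 := Ideal.radical_mono (h2.trans (Ideal.pow_le_self (ht j).ne'))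
            rwa [(hMmax j).isPrime.radical] at h3
          rw [hradQ] at h1
          exact (hPmax.eq_of_le (hMmax j).ne_top h1).symm
        have hi1 : i = 1 := by
          by_contra hi
          have h2 : (2 : ℕ) ≤ i := by omega
          have := hMinj (a₁ := ⟨0, by omega⟩) (a₂ := ⟨1, by omega⟩)
            (by rw [hMP, hMP])
          simp [Fin.ext_iff] at this
        subst hi1
        have hQP : Q = P ^ t 0 := by
          rw [hQeq, Fin.prod_univ_one, hMP 0]
        refine ⟨t 0, ?_⟩
        rw [← IsLocalization.map_comap P.primeCompl L J, Ideal.under_def, ← hQdef, hQP, Ideal.map_pow,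
          Localization.AtPrime.map_eq_maximalIdeal]
      have hLnf : ¬IsField L := IsLocalization.AtPrime.not_isField R hP0 L
      exact ((IsDiscreteValuationRing.TFAE L hLnf).out 0 6).mpr key
    haveI : IsDedekindDomainDvr R :=
      { toIsNoetherian := inferInstance
        is_dvr_at_nonzero_prime := hdvr }
    exact IsDedekindDomainDvr.isDedekindDomain R
end

section
/- Let a ∈ R be a nonunit, let m ≥ 2 be an integer, and suppose the annihilator condition (0 :_R a) ⊆ ⟨a⟩ holds. Let φ be a function from the set of ideals of R to itself with φ(J) ⊆ Jᵐ for every ideal J (i.e. φ ≤ φ_m). Then the principal ideal ⟨a⟩ is φ-n-absorbing primary if and only if ⟨a⟩ is n-absorbing primary. -/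
/-- Theorem 2.20: if `a` is a nonunit, `m ≥ 2`, `(0 : a) ⊆ ⟨a⟩` and
`φ ≤ φ_m`, then `⟨a⟩` is `φ`-`n`-absorbing primary iff it is `n`-absorbing
primary. -/
theorem stmt_8 {R : Type*} [CommRing R] [Nontrivial R] (n : ℕ) (hn : 0 < n)
    (a : R) (ha : ¬ IsUnit a) (m : ℕ) (hm : 2 ≤ m)
    (hann : ∀ r : R, r * a = 0 → r ∈ Ideal.span {a})
    (φ : Ideal R → Ideal R) (hφ : ∀ J : Ideal R, φ J ≤ J ^ m) :
    IsPhiNAbsorbingPrimary φ n (Ideal.span {a}) ↔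
      IsNAbsorbingPrimary n (Ideal.span {a}) := by
  haveI : NeZero n := ⟨hn.ne'⟩
  set I := Ideal.span {a} with hI
  have haI : a ∈ I := Ideal.mem_span_singleton_self a
  constructor
  · rintro ⟨hne, h⟩
    refine ⟨hne, fun c hc => ?_⟩
    by_cases hφc : (∏ i, c i) ∈ φ I
    · set c' := Function.update c 0 (c 0 + a) with hc'def
      have h0 : (0 : Fin (n+1)) ∈ Finset.univ := Finset.mem_univ _
      set P0 := ∏ j ∈ Finset.univ.erase (0 : Fin (n+1)), c j with hP0def
      have hP : ∏ i, c' i = (c 0 + a) * P0 := by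
        rw [hP0def, Finset.erase_eq]; exact Finset.prod_update_of_mem h0 _ _
      have hPc : ∏ i, c i = c 0 * P0 := (Finset.mul_prod_erase _ _ h0).symm
      have haP0 : a * P0 ∈ I := Ideal.mul_mem_right _ _ haI
      have hsum : ∏ i, c' i = (∏ i, c i) + a * P0 := by rw [hP, hPc]; ring
      have hc'I : ∏ i, c' i ∈ I := by rw [hsum]; exact Ideal.add_mem _ hc haP0
      by_cases hφc' : (∏ i, c' i) ∈ φ I
      · -- then a * P0 ∈ φ I ⊆ I^m ⊆ I^2 = ⟨a^2⟩, use annihilator condition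
        have hmem : a * P0 ∈ φ I := by
          have := (φ I).sub_mem hφc' hφc
          rwa [hsum, add_sub_cancel_left] at this
        have hle : φ I ≤ Ideal.span {a ^ 2} := by
          calc φ I ≤ I ^ m := hφ I
            _ ≤ I ^ 2 := Ideal.pow_le_pow_right hm
            _ = Ideal.span {a ^ 2} := by rw [hI, Ideal.span_singleton_pow]
        have hdvd : a ^ 2 ∣ a * P0 := Ideal.mem_span_singleton.mp (hle hmem)
        obtain ⟨r, hr⟩ := hdvd
        have hz : (P0 - a * r) * a = 0 := by
          have : a * P0 - a ^ 2 * r = 0 := by rw [hr]; ring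
          calc (P0 - a * r) * a = a * P0 - a ^ 2 * r := by ring
            _ = 0 := this
        have hP0I : P0 ∈ I := by
          have h1 : P0 - a * r ∈ I := hann _ hz
          have h2 : a * r ∈ I := Ideal.mul_mem_right _ _ haI
          have := Ideal.add_mem _ h1 h2
          simpa using this
        exact Or.inr ⟨0, by simpa using Ideal.le_radical hP0I⟩
      · rcases h c' hc'I hφc' with hl | ⟨i, hi⟩
        · -- left case: deduce the first-n product of c is in I
          left
          set d : Fin n → R := fun i => c i.castSucc with hd
          have hupdate : (fun i : Fin n => c' i.castSucc)
              = Function.update d 0 (c 0 + a) := by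
            funext i
            simp [hc'def, hd, Function.update_apply, Fin.castSucc_eq_zero_iff]
          set Q := ∏ j ∈ Finset.univ.erase (0 : Fin n), d j with hQ
          have h0n : (0 : Fin n) ∈ Finset.univ := Finset.mem_univ _
          have e1 : ∏ i : Fin n, c' i.castSucc = (c 0 + a) * Q := by
            rw [show (∏ i : Fin n, c' i.castSucc)
                = ∏ i : Fin n, Function.update d 0 (c 0 + a) i from by
              rw [← hupdate]]
            rw [hQ, Finset.erase_eq]; exact Finset.prod_update_of_mem h0n _ _
          have e2 : ∏ i : Fin n, c i.castSucc = c 0 * Q := by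
            have : d 0 = c 0 := by simp [hd]
            rw [show (∏ i : Fin n, c i.castSucc) = ∏ i, d i from rfl,
              ← Finset.mul_prod_erase _ _ h0n, this]
          have haQ : a * Q ∈ I := Ideal.mul_mem_right _ _ haI
          have : ∏ i : Fin n, c i.castSucc
              = (∏ i : Fin n, c' i.castSucc) - a * Q := by rw [e1, e2]; ring
          rw [this]
          exact Ideal.sub_mem _ hl haQ
        · right
          by_cases hi0 : i = 0
          · subst hi0
            refine ⟨0, ?_⟩
            have : ∏ j ∈ Finset.univ.erase ((0 : Fin n).castSucc), c' j
                = ∏ j ∈ Finset.univ.erase ((0 : Fin n).castSucc), c j := by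
              refine Finset.prod_congr rfl fun j hj => ?_
              have : j ≠ 0 := by simpa using (Finset.mem_erase.mp hj).1
              simp [hc'def, Function.update_of_ne this]
            rwa [this] at hi
          · have hne0 : i.castSucc ≠ 0 := by
              simpa [Fin.castSucc_eq_zero_iff] using hi0
            refine ⟨i, ?_⟩
            have h0s : (0 : Fin (n+1)) ∈ Finset.univ.erase i.castSucc :=
              Finset.mem_erase.mpr ⟨Ne.symm hne0, Finset.mem_univ _⟩
            set Q := ∏ j ∈ (Finset.univ.erase i.castSucc).erase 0, c j with hQ
            have e1 : ∏ j ∈ Finset.univ.erase i.castSucc, c' j = (c 0 + a) * Q := by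
              rw [hQ, show ((Finset.univ.erase i.castSucc).erase (0 : Fin (n+1)))
                  = (Finset.univ.erase i.castSucc) \ {0} from Finset.erase_eq _ _]
              exact Finset.prod_update_of_mem h0s _ _
            have e2 : ∏ j ∈ Finset.univ.erase i.castSucc, c j = c 0 * Q :=
              (Finset.mul_prod_erase _ _ h0s).symm
            have haQ : a * Q ∈ I.radical :=
              Ideal.le_radical (Ideal.mul_mem_right _ _ haI)
            have : ∏ j ∈ Finset.univ.erase i.castSucc, c j
                = (∏ j ∈ Finset.univ.erase i.castSucc, c' j) - a * Q := by
              rw [e1, e2]; ring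
            rw [this]
            exact Ideal.sub_mem _ hi haQ
    · exact h c hc hφc
  · rintro ⟨hne, h⟩
    exact ⟨hne, fun c hc _ => h c hc⟩
end

section
/- Let I be a proper ideal of R and φ a function from the set of ideals of R to itself with φ(I) ⊆ I. Then I is a φ-n-absorbing primary ideal of R if and only if the image I/φ(I) of I in the quotient ring R/φ(I) is a weakly n-absorbing primary ideal of R/φ(I). -/
/-- A proper ideal `I` is weakly `n`-absorbing primary: whenever
`0 ≠ a₁ ⋯ a_{n+1} ∈ I`, either `a₁ ⋯ a_n ∈ I` or the product of `a_{n+1}` with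
`n - 1` of `a₁, …, a_n` lies in `√I`. -/
def IsWeaklyNAbsorbingPrimary {R : Type*} [CommRing R] (n : ℕ) (I : Ideal R) : Prop :=
  I ≠ ⊤ ∧ ∀ a : Fin (n + 1) → R,
    (∏ i, a i) ≠ 0 → (∏ i, a i) ∈ I →
      ((∏ i : Fin n, a i.castSucc) ∈ I ∨
        ∃ i : Fin n, (∏ j ∈ Finset.univ.erase i.castSucc, a j) ∈ I.radical)


lemma radAux {R : Type*} [CommRing R] (J I : Ideal R) (h : J ≤ I) (x : R) :
    Ideal.Quotient.mk J x ∈ (I.map (Ideal.Quotient.mk J)).radical ↔ x ∈ I.radical := by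
  simp only [Ideal.mem_radical_iff, ← map_pow, Ideal.mem_quotient_iff_mem h]

/-- Corollary 2.22: `I` is `φ`-`n`-absorbing primary iff `I/φ(I)` is a weakly
`n`-absorbing primary ideal of `R/φ(I)`. -/
theorem stmt_9 {R : Type*} [CommRing R] [Nontrivial R] (n : ℕ) (hn : 0 < n)
    (φ : Ideal R → Ideal R) (I : Ideal R) (hφ : φ I ≤ I) (hI : I ≠ ⊤) :
    IsPhiNAbsorbingPrimary φ n I ↔
      IsWeaklyNAbsorbingPrimary n
        (I.map (Ideal.Quotient.mk (φ I))) := by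
  set q := Ideal.Quotient.mk (φ I) with hq
  have hmem : ∀ x : R, q x ∈ I.map q ↔ x ∈ I := fun x => Ideal.mem_quotient_iff_mem hφ
  have hzero : ∀ x : R, q x = 0 ↔ x ∈ φ I := fun x => Ideal.Quotient.eq_zero_iff_mem
  have htop : I.map q ≠ ⊤ := by
    intro h
    apply hI
    rw [Ideal.eq_top_iff_one]
    rw [← hmem 1, map_one, ← Ideal.eq_top_iff_one, h]
  constructor
  · rintro ⟨-, H⟩
    refine ⟨htop, fun a hne hmemI => ?_⟩
    obtain ⟨b, hb⟩ : ∃ b : Fin (n+1) → R, ∀ i, q (b i) = a i := by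
      choose b hb using fun i => Ideal.Quotient.mk_surjective (a i)
      exact ⟨b, hb⟩
    have hprod : q (∏ i, b i) = ∏ i, a i := by
      rw [map_prod]; exact Finset.prod_congr rfl fun i _ => hb i
    have h1 : (∏ i, b i) ∈ I := (hmem _).1 (hprod ▸ hmemI)
    have h2 : (∏ i, b i) ∉ φ I := fun h => hne (hprod ▸ (hzero _).2 h)
    rcases H b h1 h2 with h | ⟨i, hi⟩
    · left
      have : q (∏ i : Fin n, b i.castSucc) = ∏ i : Fin n, a i.castSucc := by
        rw [map_prod]; exact Finset.prod_congr rfl fun i _ => hb _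
      exact this ▸ (hmem _).2 h
    · right
      refine ⟨i, ?_⟩
      have : q (∏ j ∈ Finset.univ.erase i.castSucc, b j)
          = ∏ j ∈ Finset.univ.erase i.castSucc, a j := by
        rw [map_prod]; exact Finset.prod_congr rfl fun j _ => hb _
      exact this ▸ (radAux (φ I) I hφ _).2 hi
  · rintro ⟨-, H⟩
    refine ⟨hI, fun a hmemI hnφ => ?_⟩
    have hprod : (∏ i, q (a i)) = q (∏ i, a i) := (map_prod q a Finset.univ).symm
    have h1 : (∏ i, q (a i)) ≠ 0 := by
      rw [hprod]; exact fun h => hnφ ((hzero _).1 h)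
    have h2 : (∏ i, q (a i)) ∈ I.map q := by rw [hprod]; exact (hmem _).2 hmemI
    rcases H (fun i => q (a i)) h1 h2 with h | ⟨i, hi⟩
    · left
      rw [← map_prod] at h
      exact (hmem _).1 h
    · right
      refine ⟨i, ?_⟩
      rw [← map_prod] at hi
      exact (radAux (φ I) I hφ _).1 hi
end

section
/- Let I be an ideal of R and φ a function from the set of ideals of R to itself with φ(I) ⊆ I, such that φ(I) is an n-absorbing primary ideal of R. If I is a φ-n-absorbing primary ideal of R, then I is an n-absorbing primary ideal of R. -/
/-- Proposition 2.27: if `φ(I)` is `n`-absorbing primary and `I` is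
`φ`-`n`-absorbing primary, then `I` is `n`-absorbing primary. -/
theorem stmt_11 {R : Type*} [CommRing R] [Nontrivial R] (n : ℕ) (hn : 0 < n)
    (φ : Ideal R → Ideal R) (I : Ideal R) (hφ : φ I ≤ I)
    (hφI : IsNAbsorbingPrimary n (φ I))
    (hI : IsPhiNAbsorbingPrimary φ n I) :
    IsNAbsorbingPrimary n I := by
  refine ⟨hI.1, fun a ha => ?_⟩
  by_cases h : (∏ i, a i) ∈ φ I
  · rcases hφI.2 a h with h1 | ⟨i, hi⟩
    · exact Or.inl (hφ h1)
    · exact Or.inr ⟨i, Ideal.radical_mono hφ hi⟩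
  · exact hI.2 a ha h
end

section
/- Let I be a φ-n-absorbing primary ideal of R and suppose (a₁, …, a_{n+1}) is a φ-(n+1)-tuple of I, i.e. a₁a₂⋯a_{n+1} ∈ φ(I), a₁a₂⋯a_n ∉ I, and a₁⋯âᵢ⋯a_{n+1} ∉ √I for every 1 ≤ i ≤ n. Then for every integer 1 ≤ m ≤ n and every choice of m distinct indices α₁, …, α_m ∈ {1, 2, …, n+1}, one has (∏_{j ∉ {α₁,…,α_m}} a_j) · Iᵐ ⊆ φ(I); that is, for all x₁, …, x_m ∈ I the element (∏_{j ∉ {α₁,…,α_m}} a_j) x₁x₂⋯x_m lies in φ(I). -/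
lemma prod_sub_prod_mem' {R : Type*} [CommRing R] {ι : Type*} (J : Ideal R) (t : Finset ι)
    (f g : ι → R) (h : ∀ j ∈ t, f j - g j ∈ J) :
    (∏ j ∈ t, f j) - ∏ j ∈ t, g j ∈ J := by
  rw [← Ideal.Quotient.eq, map_prod, map_prod]
  exact Finset.prod_congr rfl fun j hj => Ideal.Quotient.eq.mpr (h j hj)

lemma key_lemma {R : Type*} [CommRing R] (n : ℕ)
    (φ : Ideal R → Ideal R) (I : Ideal R)
    (hI : IsPhiNAbsorbingPrimary φ n I) (a : Fin (n + 1) → R)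
    (h1 : (∏ i, a i) ∈ φ I)
    (h2 : (∏ i : Fin n, a i.castSucc) ∉ I)
    (h3 : ∀ i : Fin n, (∏ j ∈ Finset.univ.erase i.castSucc, a j) ∉ I.radical)
    (hφ : ∀ J : Ideal R, φ J ≤ J) :
    ∀ s : Finset (Fin (n + 1)), s.Nonempty → s.card ≤ n →
      ∀ x : Fin (n + 1) → R, (∀ j ∈ s, x j ∈ I) →
        (∏ j ∈ sᶜ, a j) * ∏ j ∈ s, x j ∈ φ I := by
  intro s
  induction s using Finset.strongInduction with
  | _ s IH =>
    intro hne hcard x hx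
    by_contra hP
    classical
    set b : Fin (n + 1) → R := fun j => if j ∈ s then a j + x j else a j with hb
    have hbd : ∀ j, b j - a j ∈ I := by
      intro j
      by_cases h : j ∈ s <;> simp [hb, h]
      exact hx j h
    -- expansion of the full product
    have hunion : ∀ T : Finset (Fin (n + 1)), T ⊆ s →
        (∏ j ∈ sᶜ, a j) * ∏ j ∈ s \ T, a j = ∏ j ∈ Tᶜ, a j := by
      intro T hT
      rw [← Finset.prod_union]
      · apply Finset.prod_congr _ fun _ _ => rfl
        ext j
        have hj := @hT j
        simp only [Finset.mem_union, Finset.mem_compl, Finset.mem_sdiff] at *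
        tauto
      · exact Finset.disjoint_left.mpr fun j hj hj' => (Finset.mem_compl.mp hj)
          (Finset.mem_sdiff.mp hj').1
    have hexp : ∏ j, b j =
        ∑ T ∈ s.powerset, (∏ j ∈ Tᶜ, a j) * ∏ j ∈ T, x j := by
      rw [← Finset.prod_mul_prod_compl s b]
      have e1 : ∏ j ∈ s, b j = ∏ j ∈ s, (x j + a j) :=
        Finset.prod_congr rfl fun j hj => by simp [hb, hj, add_comm]
      have e2 : ∏ j ∈ sᶜ, b j = ∏ j ∈ sᶜ, a j :=
        Finset.prod_congr rfl fun j hj => by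
          simp [hb, Finset.mem_compl.mp hj]
      rw [e1, e2, Finset.prod_add, Finset.sum_mul]
      refine Finset.sum_congr rfl fun T hT => ?_
      rw [← hunion T (Finset.mem_powerset.mp hT)]
      ring
    -- every term except T = s lies in φ I
    have hterm : ∀ T ∈ s.powerset, T ≠ s →
        (∏ j ∈ Tᶜ, a j) * ∏ j ∈ T, x j ∈ φ I := by
      intro T hT hTs
      have hTsub : T ⊆ s := Finset.mem_powerset.mp hT
      rcases T.eq_empty_or_nonempty with rfl | hTne
      · simpa [Finset.compl_empty] using h1
      · exact IH T (Finset.ssubset_iff_subset_ne.mpr ⟨hTsub, hTs⟩) hTne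
          (le_trans (Finset.card_le_card hTsub) hcard) x
          (fun j hj => hx j (hTsub hj))
    have hsmem : s ∈ s.powerset := Finset.mem_powerset.mpr (subset_refl s)
    have hsum_ne : ∑ T ∈ s.powerset.erase s, (∏ j ∈ Tᶜ, a j) * ∏ j ∈ T, x j ∈ φ I :=
      Ideal.sum_mem _ fun T hT =>
        hterm T (Finset.mem_of_mem_erase hT) (Finset.ne_of_mem_erase hT)
    have hsplit : ∏ j, b j =
        ((∏ j ∈ sᶜ, a j) * ∏ j ∈ s, x j) +
          ∑ T ∈ s.powerset.erase s, (∏ j ∈ Tᶜ, a j) * ∏ j ∈ T, x j := by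
      rw [hexp, ← Finset.add_sum_erase _ _ hsmem]
    have hnotphi : (∏ j, b j) ∉ φ I := by
      intro hmem
      apply hP
      have := (φ I).sub_mem hmem hsum_ne
      rw [hsplit] at this
      simpa using this
    have hinI : (∏ j, b j) ∈ I := by
      rw [hsplit]
      refine I.add_mem (I.mul_mem_left _ ?_) (hφ I hsum_ne)
      obtain ⟨j₀, hj₀⟩ := hne
      rw [← Finset.mul_prod_erase _ _ hj₀]
      exact I.mul_mem_right _ (hx j₀ hj₀)
    rcases hI.2 b hinI hnotphi with h | ⟨i, hi⟩
    · apply h2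
      have hq := prod_sub_prod_mem' I Finset.univ (fun i : Fin n => b i.castSucc)
        (fun i : Fin n => a i.castSucc) (fun j _ => hbd _)
      have := I.sub_mem h hq
      simpa using this
    · apply h3 i
      have hq := prod_sub_prod_mem' I.radical (Finset.univ.erase i.castSucc) b a
        (fun j _ => Ideal.le_radical (hbd j))
      have := I.radical.sub_mem hi hq
      simpa using this

/-- Theorem 2.30: if `I` is `φ`-`n`-absorbing primary and `(a₁, …, a_{n+1})`
is a `φ`-`(n+1)`-tuple of `I`, then for every choice of `m` distinct indices
`α₁, …, α_m` (`1 ≤ m ≤ n`), `(a₁ ⋯ â_{α₁} ⋯ â_{α_m} ⋯ a_{n+1}) Iᵐ ⊆ φ(I)`;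
here the set `s` of omitted indices plays the role of `{α₁, …, α_m}`. -/
theorem stmt_12 {R : Type*} [CommRing R] [Nontrivial R] (n : ℕ) (hn : 0 < n)
    (φ : Ideal R → Ideal R) (hφ : ∀ J : Ideal R, φ J ≤ J) (I : Ideal R)
    (hI : IsPhiNAbsorbingPrimary φ n I) (a : Fin (n + 1) → R)
    (h1 : (∏ i, a i) ∈ φ I)
    (h2 : (∏ i : Fin n, a i.castSucc) ∉ I)
    (h3 : ∀ i : Fin n, (∏ j ∈ Finset.univ.erase i.castSucc, a j) ∉ I.radical) :
    ∀ s : Finset (Fin (n + 1)), s.Nonempty → s.card ≤ n →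
      ∀ x : Fin s.card → R, (∀ j, x j ∈ I) →
        (∏ j ∈ sᶜ, a j) * ∏ j, x j ∈ φ I := by
  intro s hne hcard x hx
  classical
  set e := s.orderIsoOfFin rfl with he
  set y : Fin (n + 1) → R := fun j => if h : j ∈ s then x (e.symm ⟨j, h⟩) else 0 with hy
  have hmem : ∀ j ∈ s, y j ∈ I := by
    intro j hj
    simp only [hy, dif_pos hj]
    exact hx _
  have hcompy : ∀ i : Fin s.card, y ↑(e i) = x i := by
    intro i
    simp only [hy, dif_pos (e i).2]
    congr 1
    have : (⟨↑(e i), (e i).2⟩ : {z // z ∈ s}) = e i := rfl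
    rw [this, OrderIso.symm_apply_apply]
  have hprod : ∏ j ∈ s, y j = ∏ j, x j := by
    rw [← Finset.prod_coe_sort s y, ← Equiv.prod_comp e.toEquiv (fun j : s => y ↑j)]
    exact Finset.prod_congr rfl fun i _ => hcompy i
  have := key_lemma n φ I hI a h1 h2 h3 hφ s hne hcard y hmem
  rwa [hprod] at this
end

section
/- Let I be a φ-n-absorbing primary ideal of R, where φ(I) ⊆ I, and suppose I is not an n-absorbing primary ideal of R. Then I^{n+1} ⊆ φ(I) and √I = √(φ(I)). -/
section Aux

variable {R : Type*} [CommRing R]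

lemma prodMemOfNonempty {ι : Type*} [DecidableEq ι] (J : Ideal R) (y : ι → R)
    (hy : ∀ i, y i ∈ J) {T : Finset ι} (hT : T.Nonempty) : (∏ i ∈ T, y i) ∈ J := by
  obtain ⟨j, hj⟩ := hT
  rw [← Finset.mul_prod_erase T y hj]
  exact Ideal.mul_mem_right _ _ (hy j)

/-- If each `y i ∈ J` and `∏ (y i + a i) ∈ J`, then `∏ a i ∈ J`. -/
lemma extractAux {ι : Type*} [DecidableEq ι] (J : Ideal R) (U : Finset ι) (y a : ι → R)
    (hy : ∀ i, y i ∈ J) (h : (∏ i ∈ U, (y i + a i)) ∈ J) : (∏ i ∈ U, a i) ∈ J := by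
  have expand := Finset.prod_add y a U
  rw [← Finset.add_sum_erase _ _ (Finset.empty_mem_powerset U)] at expand
  simp only [Finset.prod_empty, one_mul, Finset.sdiff_empty] at expand
  have hsum : (∑ T ∈ (U.powerset).erase ∅, (∏ i ∈ T, y i) * ∏ i ∈ U \ T, a i) ∈ J := by
    refine Ideal.sum_mem _ fun T hT => ?_
    obtain ⟨hTne, _⟩ := Finset.mem_erase.mp hT
    exact Ideal.mul_mem_right _ _ (prodMemOfNonempty J y hy (Finset.nonempty_iff_ne_empty.2 hTne))
  have heq : (∏ i ∈ U, a i)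
      = (∏ i ∈ U, (y i + a i)) - ∑ T ∈ (U.powerset).erase ∅, (∏ i ∈ T, y i) * ∏ i ∈ U \ T, a i := by
    rw [expand]; ring
  rw [heq]
  exact Ideal.sub_mem _ h hsum

lemma prodCastSucc {M : Type*} [CommMonoid M] {n : ℕ} (f : Fin (n + 1) → M) :
    (∏ i : Fin n, f i.castSucc) = ∏ j ∈ Finset.univ.erase (Fin.last n), f j := by
  have himg : (Finset.univ : Finset (Fin (n + 1))).erase (Fin.last n)
      = Finset.univ.image Fin.castSucc := by
    ext j
    simp only [Finset.mem_erase, Finset.mem_univ, and_true, Finset.mem_image, true_and]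
    constructor
    · exact fun hj => Fin.exists_castSucc_eq.mpr hj
    · rintro ⟨i, rfl⟩; exact (Fin.castSucc_lt_last i).ne
  rw [himg, Finset.prod_image (fun x _ y _ h => Fin.castSucc_injective n h)]

/-- Key lemma: products of `a i` outside `S` with elements of `I` on `S` land in `φ I`. -/
lemma keyLemma {n : ℕ} (φ : Ideal R → Ideal R) (I : Ideal R)
    (hphi : ∀ b : Fin (n + 1) → R, (∏ i, b i) ∈ I → (∏ i, b i) ∉ φ I →
      ((∏ i : Fin n, b i.castSucc) ∈ I ∨
        ∃ i : Fin n, (∏ j ∈ Finset.univ.erase i.castSucc, b j) ∈ I.radical))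
    (a : Fin (n + 1) → R) (haI : (∏ i, a i) ∈ I)
    (h2 : (∏ i : Fin n, a i.castSucc) ∉ I)
    (h3 : ∀ i : Fin n, (∏ j ∈ Finset.univ.erase i.castSucc, a j) ∉ I.radical) :
    ∀ S : Finset (Fin (n + 1)), ∀ x : Fin (n + 1) → R, (∀ i, x i ∈ I) →
      (∏ i ∈ Sᶜ, a i) * ∏ i ∈ S, x i ∈ φ I := by
  intro S
  induction S using Finset.strongInduction with
  | _ S ih =>
    intro x hx
    set y : Fin (n + 1) → R := fun i => if i ∈ S then x i else 0 with hy
    have hyI : ∀ i, y i ∈ I := fun i => by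
      by_cases h : i ∈ S <;> simp [hy, h, hx i]
    set b : Fin (n + 1) → R := fun i => y i + a i with hb
    have hbI : (∏ i, b i) ∈ I := by
      rw [hb, Finset.prod_add y a Finset.univ]
      refine Ideal.sum_mem _ fun T _ => ?_
      rcases T.eq_empty_or_nonempty with rfl | hTne
      · simpa using haI
      · exact Ideal.mul_mem_right _ _ (prodMemOfNonempty I y hyI hTne)
    have hbφ : (∏ i, b i) ∈ φ I := by
      by_contra hc
      rcases hphi b hbI hc with hcase | ⟨i, hcase⟩
      · refine h2 ?_
        rw [prodCastSucc] at hcase ⊢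
        exact extractAux I _ y a hyI hcase
      · refine h3 i ?_
        exact extractAux I.radical _ y a (fun j => Ideal.le_radical (hyI j)) hcase
    have expand := Finset.prod_add y a Finset.univ
    rw [← Finset.add_sum_erase _ _ (Finset.mem_powerset.2 (Finset.subset_univ S))] at expand
    have hxS : (∏ i ∈ S, y i) = ∏ i ∈ S, x i :=
      Finset.prod_congr rfl fun i hi => by simp [hy, hi]
    have hcomplS : (Finset.univ \ S : Finset (Fin (n + 1))) = Sᶜ :=
      (Finset.compl_eq_univ_sdiff S).symm
    have hsum : (∑ T ∈ (Finset.univ.powerset).erase S,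
        (∏ i ∈ T, y i) * ∏ i ∈ Finset.univ \ T, a i) ∈ φ I := by
      refine Ideal.sum_mem _ fun T hT => ?_
      obtain ⟨hTne, _⟩ := Finset.mem_erase.mp hT
      by_cases hTS : T ⊆ S
      · have hTy : (∏ i ∈ T, y i) = ∏ i ∈ T, x i :=
          Finset.prod_congr rfl fun i hi => by simp [hy, hTS hi]
        have := ih T ⟨hTS, fun h => hTne (Finset.Subset.antisymm hTS h)⟩ x hx
        rw [hTy, ← Finset.compl_eq_univ_sdiff, mul_comm]
        exact this
      · obtain ⟨j, hjT, hjS⟩ := Finset.not_subset.mp hTS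
        have : (∏ i ∈ T, y i) = 0 := Finset.prod_eq_zero hjT (by simp [hy, hjS])
        simp [this]
    have heq : (∏ i ∈ Sᶜ, a i) * ∏ i ∈ S, x i
        = (∏ i, (y i + a i)) - ∑ T ∈ (Finset.univ.powerset).erase S,
            (∏ i ∈ T, y i) * ∏ i ∈ Finset.univ \ T, a i := by
      rw [expand, hxS, hcomplS]; ring
    rw [heq]
    exact Ideal.sub_mem _ hbφ hsum

end Aux

/-- Theorem 2.31: if `I` is `φ`-`n`-absorbing primary but not `n`-absorbing
primary, then `I^{n+1} ⊆ φ(I)` and `√I = √(φ(I))`. -/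
theorem stmt_13 {R : Type*} [CommRing R] [Nontrivial R] (n : ℕ) (hn : 0 < n)
    (φ : Ideal R → Ideal R) (I : Ideal R) (hφ : φ I ≤ I)
    (hI : IsPhiNAbsorbingPrimary φ n I)
    (hnot : ¬ IsNAbsorbingPrimary n I) :
    I ^ (n + 1) ≤ φ I ∧ I.radical = (φ I).radical := by
  obtain ⟨hItop, hphi⟩ := hI
  rw [IsNAbsorbingPrimary] at hnot
  push_neg at hnot
  obtain ⟨a, haI, h2, h3⟩ := hnot hItop
  have key : ∀ x : Fin (n + 1) → R, (∀ i, x i ∈ I) → (∏ i, x i) ∈ φ I := by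
    intro x hx
    have := keyLemma φ I hphi a haI h2 h3 Finset.univ x hx
    simpa using this
  have aux : ∀ m (c : R), (∀ x : Fin m → R, (∀ i, x i ∈ I) → c * ∏ i, x i ∈ φ I) →
      ∀ r ∈ I ^ m, c * r ∈ φ I := by
    intro m
    induction m with
    | zero =>
      intro c hc r hr
      have : c ∈ φ I := by simpa using hc (fun i => 0) (fun i => i.elim0)
      exact Ideal.mul_mem_right _ _ this
    | succ m ihm =>
      intro c hc r hr
      rw [pow_succ] at hr
      refine Submodule.mul_induction_on hr ?_ ?_
      · intro p hp q hq
        have h1 : c * q * p ∈ φ I := by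
          refine ihm (c * q) (fun x hx => ?_) p hp
          have := hc (Fin.cons q x) (fun i => Fin.cases hq (fun j => hx j) i)
          rw [Fin.prod_cons] at this
          convert this using 1
          ring
        convert h1 using 1
        ring
      · intro u v hu hv
        have := Ideal.add_mem (φ I) hu hv
        simpa [mul_add] using this
  have hpow : I ^ (n + 1) ≤ φ I := by
    intro r hr
    have := aux (n + 1) 1 (fun x hx => by simpa using key x hx) r hr
    simpa using this
  refine ⟨hpow, le_antisymm ?_ (Ideal.radical_mono hφ)⟩
  calc I.radical = (I ^ (n + 1)).radical := (Ideal.radical_pow I n.succ_ne_zero).symm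
    _ ≤ (φ I).radical := Ideal.radical_mono hpow
end

section
/- Let I be a weakly n-absorbing primary ideal of R that is not an n-absorbing primary ideal of R. Then I^{n+1} = {0} and √I = Nil(R), the nilradical of R. -/
/-- Corollary 2.32(1): if `I` is weakly `n`-absorbing primary but not
`n`-absorbing primary, then `I^{n+1} = 0` and `√I = Nil(R)`. -/
theorem stmt_14 {R : Type*} [CommRing R] [Nontrivial R] (n : ℕ) (hn : 0 < n)
    (I : Ideal R) (hI : IsWeaklyNAbsorbingPrimary n I)
    (hnot : ¬ IsNAbsorbingPrimary n I) :
    I ^ (n + 1) = ⊥ ∧ I.radical = nilradical R := by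
  classical
  obtain ⟨hIt, hweak⟩ := hI
  rw [IsNAbsorbingPrimary] at hnot
  push_neg at hnot
  obtain ⟨a, hmem, h2, h3⟩ := hnot hIt
  -- the witness tuple must have zero product
  have hzero : (∏ i, a i) = 0 := by
    by_contra hne
    rcases hweak a hne hmem with h' | ⟨i, h'⟩
    · exact h2 h'
    · exact h3 i h'
  -- key lemma: for any subset U, (∏_U a) * (∏_{Uᶜ} x) = 0 whenever x's lie in I
  have key : ∀ (m : ℕ) (U : Finset (Fin (n + 1))), Uᶜ.card = m →
      ∀ x : Fin (n + 1) → R, (∀ j, x j ∈ I) →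
        (∏ j ∈ U, a j) * (∏ j ∈ Uᶜ, x j) = 0 := by
    intro m
    induction m using Nat.strong_induction_on with
    | _ m ih =>
      intro U hU x hx
      rcases Nat.eq_zero_or_pos m with hm | hm
      · subst hm
        have hUc : Uᶜ = ∅ := Finset.card_eq_zero.mp hU
        have hUu : U = Finset.univ := by
          have := congrArg (·ᶜ) hUc
          simpa using this
        subst hUu
        rw [hUc]
        simp [hzero]
      · by_contra hP
        -- perturbation
        set y : Fin (n + 1) → R := fun j => if j ∈ U then 0 else x j with hy_def
        have hy : ∀ j, y j ∈ I := by
          intro j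
          by_cases hj : j ∈ U <;> simp [hy_def, hj, hx j, I.zero_mem]
        set b : Fin (n + 1) → R := fun j => a j + y j with hb_def
        -- the difference lemma: products of b and a differ by an element of I
        have L : ∀ S : Finset (Fin (n + 1)),
            (∏ j ∈ S, b j) - (∏ j ∈ S, a j) ∈ I := by
          intro S
          rw [show (∏ j ∈ S, b j) = ∏ j ∈ S, (a j + y j) from rfl,
            Finset.prod_add,
            ← Finset.add_sum_erase _ _ (Finset.mem_powerset_self S)]
          rw [Finset.sdiff_self, Finset.prod_empty, mul_one, add_sub_cancel_left]
          refine Ideal.sum_mem _ ?_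
          intro T hT
          have hTS : T ⊆ S := Finset.mem_powerset.mp (Finset.mem_of_mem_erase hT)
          have hTne : T ≠ S := Finset.ne_of_mem_erase hT
          have hne : (S \ T).Nonempty := by
            rw [Finset.sdiff_nonempty]
            intro hST
            exact hTne (Finset.Subset.antisymm hTS hST)
          obtain ⟨j₀, hj₀⟩ := hne
          rw [show (∏ j ∈ T, a j) * ∏ j ∈ S \ T, y j
              = y j₀ * ((∏ j ∈ T, a j) * ∏ j ∈ (S \ T).erase j₀, y j) by
            rw [← Finset.mul_prod_erase _ _ hj₀]; ring]
          exact Ideal.mul_mem_right _ _ (hy j₀)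
        -- compute the full product of b
        have hprod : (∏ j, b j) = (∏ j ∈ U, a j) * (∏ j ∈ Uᶜ, x j) := by
          rw [show (∏ j, b j) = ∏ j ∈ Finset.univ, (a j + y j) from rfl,
            Finset.prod_add]
          rw [Finset.sum_eq_single_of_mem U (by simp)]
          · rw [← Finset.compl_eq_univ_sdiff]
            refine congrArg _ (Finset.prod_congr rfl ?_)
            intro j hj
            simp only [Finset.mem_compl] at hj
            simp [hy_def, hj]
          · intro T _ hTU
            by_cases hUT : U ⊆ T
            · have hUsT : U ⊂ T := Finset.ssubset_iff_subset_ne.mpr ⟨hUT, Ne.symm hTU⟩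
              have hcard : Tᶜ.card < m := by
                have h1 : U.card < T.card := Finset.card_lt_card hUsT
                have h2 : T.card ≤ n + 1 := by
                  simpa using Finset.card_le_univ T
                have h3 : Tᶜ.card = (n + 1) - T.card := by
                  simp [Finset.card_compl]
                have h4 : Uᶜ.card = (n + 1) - U.card := by
                  simp [Finset.card_compl]
                omega
              have hxy : (∏ j ∈ Finset.univ \ T, y j) = ∏ j ∈ Tᶜ, x j := by
                rw [← Finset.compl_eq_univ_sdiff]
                refine Finset.prod_congr rfl ?_
                intro j hj
                have hjT : j ∉ T := Finset.mem_compl.mp hj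
                have hjU : j ∉ U := fun h => hjT (hUT h)
                simp [hy_def, hjU]
              rw [hxy]
              exact ih Tᶜ.card (hU ▸ hcard) T rfl x hx
            · obtain ⟨j₀, hj₀U, hj₀T⟩ := Finset.not_subset.mp hUT
              have : (∏ j ∈ Finset.univ \ T, y j) = 0 := by
                refine Finset.prod_eq_zero (Finset.mem_sdiff.mpr ⟨Finset.mem_univ _, hj₀T⟩) ?_
                simp [hy_def, hj₀U]
              rw [this, mul_zero]
        -- apply the weakly n-absorbing primary hypothesis to b
        have hbne : (∏ j, b j) ≠ 0 := by rw [hprod]; exact hP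
        have hbmem : (∏ j, b j) ∈ I := by
          rw [hprod]
          have hUcne : Uᶜ.Nonempty := Finset.card_pos.mp (by omega)
          obtain ⟨j₀, hj₀⟩ := hUcne
          rw [show (∏ j ∈ U, a j) * (∏ j ∈ Uᶜ, x j)
              = x j₀ * ((∏ j ∈ U, a j) * ∏ j ∈ Uᶜ.erase j₀, x j) by
            rw [← Finset.mul_prod_erase _ _ hj₀]; ring]
          exact Ideal.mul_mem_right _ _ (hx j₀)
        have himg : ∀ f : Fin (n + 1) → R,
            (∏ j ∈ Finset.image Fin.castSucc Finset.univ, f j) = ∏ i : Fin n, f i.castSucc :=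
          fun f => Finset.prod_image (fun i _ j _ h => Fin.castSucc_injective n h)
        rcases hweak b hbne hbmem with hc | ⟨i, hc⟩
        · -- first-n product of b in I forces first-n product of a in I
          apply h2
          have hb' : (∏ j ∈ Finset.image Fin.castSucc Finset.univ, b j) ∈ I := by
            rw [himg]; exact hc
          have := I.sub_mem hb' (L (Finset.image Fin.castSucc Finset.univ))
          rw [sub_sub_cancel] at this
          rw [← himg]
          exact this
        · -- erased product of b in √I forces erased product of a in √I
          apply h3 i
          have hd := Ideal.le_radical (L (Finset.univ.erase i.castSucc))
          have := I.radical.sub_mem hc hd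
          rw [sub_sub_cancel] at this
          exact this
  -- all (n+1)-fold products of elements of I vanish
  have key0 : ∀ x : Fin (n + 1) → R, (∀ j, x j ∈ I) → (∏ j, x j) = 0 := by
    intro x hx
    have := key (n + 1) ∅ (by simp) x hx
    simpa using this
  -- I^(n+1) annihilation lemma
  have K2 : ∀ (k : ℕ) (U : Finset (Fin (n + 1))), U.card = k →
      ∀ z ∈ I ^ k, ∀ x : Fin (n + 1) → R, (∀ j, x j ∈ I) →
        z * (∏ j ∈ Uᶜ, x j) = 0 := by
    intro k
    induction k with
    | zero =>
      intro U hU z _ x hx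
      have hU' : U = ∅ := Finset.card_eq_zero.mp hU
      subst hU'
      rw [Finset.compl_empty, key0 x hx, mul_zero]
    | succ k ihk =>
      intro U hU z hz x hx
      have hUne : U.Nonempty := Finset.card_pos.mp (by omega)
      obtain ⟨j₀, hj₀⟩ := hUne
      rw [pow_succ] at hz
      refine Submodule.mul_induction_on hz ?_ ?_
      · intro p hp q hq
        set x' : Fin (n + 1) → R := fun j => if j = j₀ then q else x j with hx'_def
        have hx' : ∀ j, x' j ∈ I := by
          intro j
          by_cases hj : j = j₀ <;> simp [hx'_def, hj, hq, hx j]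
        have hUe : (U.erase j₀).card = k := by
          rw [Finset.card_erase_of_mem hj₀, hU]; omega
        have h1 := ihk (U.erase j₀) hUe p hp x' hx'
        have hce : (U.erase j₀)ᶜ = insert j₀ Uᶜ := by
          ext j
          simp only [Finset.mem_compl, Finset.mem_erase, Finset.mem_insert]
          by_cases hj : j = j₀ <;> simp [hj, hj₀] <;> tauto
        rw [hce, Finset.prod_insert (by simp [hj₀])] at h1
        have hq0 : x' j₀ = q := by simp [hx'_def]
        have hxx : (∏ j ∈ Uᶜ, x' j) = ∏ j ∈ Uᶜ, x j := by
          refine Finset.prod_congr rfl ?_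
          intro j hj
          have : j ≠ j₀ := fun h => (Finset.mem_compl.mp hj) (h ▸ hj₀)
          simp [hx'_def, this]
        rw [hq0, hxx] at h1
        calc p * q * ∏ j ∈ Uᶜ, x j = p * (q * ∏ j ∈ Uᶜ, x j) := by ring
        _ = 0 := h1
      · intro z₁ z₂ hz₁ hz₂
        rw [add_mul, hz₁, hz₂, add_zero]
  have hpow : I ^ (n + 1) = ⊥ := by
    refine le_antisymm ?_ bot_le
    intro z hz
    have := K2 (n + 1) Finset.univ (by simp) z hz (fun _ => 0) (fun _ => I.zero_mem)
    simpa using this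
  refine ⟨hpow, ?_⟩
  have hIn : I ≤ nilradical R := by
    intro r hr
    refine ⟨n + 1, ?_⟩
    have : r ^ (n + 1) ∈ I ^ (n + 1) := Ideal.pow_mem_pow hr (n + 1)
    rw [hpow] at this
    simpa using this
  refine le_antisymm ?_ ?_
  · have := Ideal.radical_mono hIn
    rwa [show (nilradical R).radical = nilradical R from Ideal.radical_idem _] at this
  · exact Ideal.radical_mono bot_le
end

section
/- Let φ be a function from the set of ideals of R to itself with φ(J) ⊆ J^{n+2} for every ideal J (i.e. φ ≤ φ_{n+2}). If I is a φ-n-absorbing primary ideal of R, then I is an ω-n-absorbing primary ideal of R, i.e. I is φ_ω-n-absorbing primary where φ_ω(J) = ⋂_{m=1}^{∞} Jᵐ. -/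
/-- The function `φ_ω : J ↦ ⋂_{m ≥ 1} Jᵐ`. -/
noncomputable def phiOmega {R : Type*} [CommRing R] (J : Ideal R) : Ideal R :=
  ⨅ m : ℕ, J ^ (m + 1)

private lemma pow_le_aux {R : Type*} [CommRing R] (I K : Ideal R) :
    ∀ (k : ℕ) (c : R), (∀ x : Fin k → R, (∀ i, x i ∈ I) → c * ∏ i, x i ∈ K) →
      ∀ y ∈ I ^ k, c * y ∈ K := by
  intro k
  induction k with
  | zero =>
    intro c h y _
    have hc : c ∈ K := by simpa using h (fun _ => 0) (fun i => i.elim0)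
    rw [mul_comm]
    exact K.mul_mem_left y hc
  | succ k ih =>
    intro c h y hy
    rw [pow_succ] at hy
    refine Submodule.mul_induction_on hy (fun m hm z hz => ?_) (fun u v hu hv => ?_)
    · have h' : ∀ x : Fin k → R, (∀ i, x i ∈ I) → (c * z) * ∏ i, x i ∈ K := by
        intro x hx
        have hz' := h (Fin.cons z x) (by
          intro i
          refine Fin.cases ?_ ?_ i
          · simpa using hz
          · intro j; simpa using hx j)
        rw [Fin.prod_cons] at hz'
        convert hz' using 1
        ring
      have := ih (c * z) h' m hm
      convert this using 1
      ring
    · rw [mul_add]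
      exact K.add_mem hu hv

/-- Corollary 2.33: if `φ ≤ φ_{n+2}` and `I` is `φ`-`n`-absorbing primary,
then `I` is `ω`-`n`-absorbing primary. -/
theorem stmt_15 {R : Type*} [CommRing R] [Nontrivial R] (n : ℕ) (hn : 0 < n)
    (φ : Ideal R → Ideal R) (hφ : ∀ J : Ideal R, φ J ≤ J ^ (n + 2))
    (I : Ideal R) (hI : IsPhiNAbsorbingPrimary φ n I) :
    IsPhiNAbsorbingPrimary phiOmega n I := by
  obtain ⟨hproper, habs⟩ := hI
  refine ⟨hproper, ?_⟩
  intro a hmem hnot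
  by_cases hφa : (∏ i, a i) ∈ φ I
  swap
  · exact habs a hmem hφa
  by_contra hC
  push_neg at hC
  obtain ⟨h1, h2⟩ := hC
  -- Key lemma: replacing any set of factors by elements of I lands in φ I.
  have L : ∀ T : Finset (Fin (n+1)), ∀ x : Fin (n+1) → R, (∀ i, x i ∈ I) →
      (∏ i ∈ Tᶜ, a i) * ∏ i ∈ T, x i ∈ φ I := by
    intro T
    induction T using Finset.strongInduction with
    | _ T IH =>
      intro x hx
      by_contra hE
      set g : Fin (n+1) → R := fun i => if i ∈ T then x i else 0 with hgdef
      have hgI : ∀ i, g i ∈ I := by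
        intro i
        by_cases h : i ∈ T
        · simp only [hgdef, if_pos h]; exact hx i
        · simp only [hgdef, if_neg h]; exact I.zero_mem
      set c : Fin (n+1) → R := fun i => a i + g i with hcdef
      have expand : ∀ s : Finset (Fin (n+1)),
          ∏ i ∈ s, c i = ∑ t ∈ s.powerset, (∏ i ∈ t, a i) * ∏ i ∈ s \ t, g i := by
        intro s
        simp only [hcdef]
        exact Finset.prod_add a g s
      have term_mem : ∀ s t : Finset (Fin (n+1)), t ⊆ s → t ≠ s →
          (∏ i ∈ t, a i) * ∏ i ∈ s \ t, g i ∈ I := by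
        intro s t hts hne
        obtain ⟨j, hj⟩ := Finset.sdiff_nonempty.2
          (fun h => hne (Finset.Subset.antisymm hts h))
        have hprod : ∏ i ∈ s \ t, g i ∈ I := by
          rw [← Finset.mul_prod_erase _ _ hj]
          exact Ideal.mul_mem_right _ _ (hgI j)
        exact Ideal.mul_mem_left _ _ hprod
      have diff_mem : ∀ s : Finset (Fin (n+1)),
          (∏ i ∈ s, c i) - ∏ i ∈ s, a i ∈ I := by
        intro s
        rw [expand s, ← Finset.add_sum_erase _ _ (Finset.mem_powerset_self s),
          Finset.sdiff_self, Finset.prod_empty, mul_one, add_sub_cancel_left]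
        refine Ideal.sum_mem _ (fun t ht => ?_)
        rw [Finset.mem_erase, Finset.mem_powerset] at ht
        exact term_mem s t ht.2 ht.1
      have hc_mem : (∏ i, c i) ∈ I := by
        have hd := diff_mem Finset.univ
        have := I.add_mem hd hmem
        simpa using this
      have hc_not : (∏ i, c i) ∉ φ I := by
        intro hcφ
        apply hE
        have key : ∀ t ∈ (Finset.univ.powerset).erase Tᶜ,
            (∏ i ∈ t, a i) * ∏ i ∈ Finset.univ \ t, g i ∈ φ I := by
          intro t ht
          rw [Finset.mem_erase] at ht
          by_cases hsub : Finset.univ \ t ⊆ T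
          · have hteq : Finset.univ \ t = tᶜ := (Finset.compl_eq_univ_sdiff t).symm
            have hS : tᶜ ⊂ T := by
              refine lt_of_le_of_ne (hteq ▸ hsub) ?_
              intro h
              apply ht.1
              rw [← h]
              simp
            have hIH := IH tᶜ hS g hgI
            rw [compl_compl] at hIH
            rw [hteq]
            exact hIH
          · obtain ⟨j, hj, hjT⟩ := Finset.not_subset.1 hsub
            have hgj : g j = 0 := by simp only [hgdef, if_neg hjT]
            rw [Finset.prod_eq_zero hj hgj, mul_zero]
            exact (φ I).zero_mem
        have hsum := expand Finset.univ
        rw [← Finset.add_sum_erase _ _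
          (Finset.mem_powerset.2 (Finset.subset_univ Tᶜ))] at hsum
        have hrest : (∑ t ∈ (Finset.univ.powerset).erase Tᶜ,
            (∏ i ∈ t, a i) * ∏ i ∈ Finset.univ \ t, g i) ∈ φ I :=
          Ideal.sum_mem _ key
        have hfT : (∏ i ∈ Tᶜ, a i) * ∏ i ∈ Finset.univ \ Tᶜ, g i ∈ φ I := by
          have h' := (φ I).sub_mem hcφ hrest
          rw [hsum, add_sub_cancel_right] at h'
          exact h'
        have heqT : (∏ i ∈ Finset.univ \ Tᶜ, g i) = ∏ i ∈ T, x i := by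
          rw [← Finset.compl_eq_univ_sdiff, compl_compl]
          exact Finset.prod_congr rfl (fun i hi => by simp only [hgdef, if_pos hi])
        rwa [heqT] at hfT
      rcases habs c hc_mem hc_not with hfirst | ⟨i, hi⟩
      · apply h1
        have hinj : ∀ x ∈ (Finset.univ : Finset (Fin n)), ∀ y ∈ (Finset.univ : Finset (Fin n)),
            Fin.castSucc x = Fin.castSucc y → x = y :=
          fun x _ y _ h => Fin.castSucc_injective n h
        set U := (Finset.univ : Finset (Fin n)).image Fin.castSucc with hU
        have hPc : ∏ i ∈ U, c i = ∏ i : Fin n, c i.castSucc := Finset.prod_image hinj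
        have hPa : ∏ i ∈ U, a i = ∏ i : Fin n, a i.castSucc := Finset.prod_image hinj
        have hd := diff_mem U
        have : (∏ i ∈ U, c i) - ((∏ i ∈ U, c i) - ∏ i ∈ U, a i) ∈ I :=
          I.sub_mem (hPc ▸ hfirst) hd
        rw [sub_sub_cancel, hPa] at this
        exact this
      · apply h2 i
        have hd := diff_mem (Finset.univ.erase i.castSucc)
        have hmem' : (∏ j ∈ Finset.univ.erase i.castSucc, c j)
            - ((∏ j ∈ Finset.univ.erase i.castSucc, c j)
              - ∏ j ∈ Finset.univ.erase i.castSucc, a j) ∈ I.radical :=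
          Submodule.sub_mem _ hi (Ideal.le_radical hd)
        rw [sub_sub_cancel] at hmem'
        exact hmem'
  -- From L we obtain I^(n+1) ≤ φ I.
  have hpow : I ^ (n+1) ≤ φ I := by
    intro y hy
    have h1' : ∀ x : Fin (n+1) → R, (∀ i, x i ∈ I) → (1:R) * ∏ i, x i ∈ φ I := by
      intro x hx
      have := L Finset.univ x hx
      simpa using this
    simpa using pow_le_aux I (φ I) (n+1) 1 h1' y hy
  have hlow : I ^ (n+1+1) ≤ I ^ (n+1) := Ideal.pow_le_pow_right (by omega)
  have heq : ∀ d, I ^ (n+1+d) = I ^ (n+1) := by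
    intro d
    induction d with
    | zero => rfl
    | succ d ihd =>
      rw [show n+1+(d+1) = (n+1+d)+1 from rfl, pow_succ, ihd, ← pow_succ]
      exact le_antisymm hlow ((hpow.trans (hφ I)))
  apply hnot
  rw [phiOmega]
  rw [Submodule.mem_iInf]
  intro m
  have hP2 : ∏ i, a i ∈ I ^ (n+2) := hφ I hφa
  rcases le_or_gt (m+1) (n+2) with hm | hm
  · exact Ideal.pow_le_pow_right hm hP2
  · have hm1 : m + 1 = n + 1 + (m - n) := by omega
    have : I ^ (m+1) = I ^ (n+1) := by rw [hm1, heq]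
    rw [this, ← heq 1]
    exact hP2
end

section
/- Let n ≥ 2 and let φ be a function from the set of ideals of R to itself with φ(J) ⊆ J for every ideal J. Suppose I is a φ-(n−1)-absorbing primary ideal of R that is not an (n−1)-absorbing primary ideal, and J is an ideal of R with J ⊆ I and φ(I) ⊆ φ(J). Then J is a φ-n-absorbing primary ideal of R. -/
open Finset

lemma aux_univ_castSucc (k : ℕ) :
    (Finset.univ : Finset (Fin (k+1))) = insert (Fin.last k) (Finset.univ.map Fin.castSuccEmb) := by
  ext j
  simp only [Finset.mem_univ, Finset.mem_insert, Finset.mem_map, true_iff]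
  rcases Fin.eq_castSucc_or_eq_last j with ⟨i, rfl⟩ | rfl
  · exact Or.inr ⟨i, trivial, rfl⟩
  · exact Or.inl rfl

lemma aux_last_not_mem (k : ℕ) (s : Finset (Fin k)) : Fin.last k ∉ s.map Fin.castSuccEmb := by
  simp only [Finset.mem_map]
  rintro ⟨i, -, h⟩
  exact (Fin.castSucc_lt_last i).ne h

lemma aux_prod_erase_last {R : Type*} [CommMonoid R] {k : ℕ} (f : Fin (k+1) → R) :
    ∏ j ∈ Finset.univ.erase (Fin.last k), f j = ∏ i : Fin k, f i.castSucc := by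
  rw [aux_univ_castSucc, Finset.erase_insert (aux_last_not_mem k _), Finset.prod_map]
  rfl

lemma aux_prod_erase_castSucc {R : Type*} [CommMonoid R] {k : ℕ} (f : Fin (k+1) → R) (i : Fin k) :
    ∏ j ∈ Finset.univ.erase i.castSucc, f j
      = f (Fin.last k) * ∏ j ∈ Finset.univ.erase i, f j.castSucc := by
  rw [aux_univ_castSucc, Finset.erase_insert_of_ne (Fin.castSucc_lt_last i).ne',
    Finset.prod_insert (fun h => aux_last_not_mem k _ (Finset.mem_of_mem_erase h))]
  congr 1
  have : (Fin.castSuccEmb i : Fin (k+1)) = i.castSucc := rfl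
  rw [← this, ← Finset.map_erase, Finset.prod_map]
  rfl

lemma aux_snoc_erase_castSucc {R : Type*} [CommMonoid R] {k : ℕ} (f : Fin k → R) (y : R) (i : Fin k) :
    ∏ j ∈ Finset.univ.erase i.castSucc, (Fin.snoc f y : Fin (k+1) → R) j
      = y * ∏ j ∈ Finset.univ.erase i, f j := by
  rw [aux_prod_erase_castSucc]
  simp [Fin.snoc_castSucc, Fin.snoc_last]

lemma aux_prod_sub {R : Type*} [CommRing R] {ι : Type*} [DecidableEq ι] (K : Ideal R) (f g : ι → R) :
    ∀ (s : Finset ι), (∀ i ∈ s, g i ∈ K) →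
      (∏ i ∈ s, (f i + g i)) - ∏ i ∈ s, f i ∈ K := by
  intro s
  induction s using Finset.induction_on with
  | empty => simp
  | insert _ _ hj ih =>
    rename_i j s
    intro hg
    rw [Finset.prod_insert hj, Finset.prod_insert hj]
    have h1 := ih (fun i hi => hg i (Finset.mem_insert_of_mem hi))
    have h2 : (f j + g j) * ∏ i ∈ s, (f i + g i) - f j * ∏ i ∈ s, f i
        = f j * ((∏ i ∈ s, (f i + g i)) - ∏ i ∈ s, f i) + g j * ∏ i ∈ s, (f i + g i) := by ring
    rw [h2]
    exact K.add_mem (K.mul_mem_left _ h1) (K.mul_mem_right _ (hg j (Finset.mem_insert_self _ _)))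

/-- Theorem 2.36: if `I` is `φ`-`(n-1)`-absorbing primary but not
`(n-1)`-absorbing primary, and `J ⊆ I` with `φ(I) ⊆ φ(J)`, then `J` is a
`φ`-`n`-absorbing primary ideal of `R`. -/
theorem stmt_16 {R : Type*} [CommRing R] [Nontrivial R] (n : ℕ) (hn : 2 ≤ n)
    (φ : Ideal R → Ideal R) (hφ : ∀ K : Ideal R, φ K ≤ K) (I J : Ideal R)
    (hI : IsPhiNAbsorbingPrimary φ (n - 1) I)
    (hInot : ¬ IsNAbsorbingPrimary (n - 1) I)
    (hJI : J ≤ I) (hφIJ : φ I ≤ φ J) :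
    IsPhiNAbsorbingPrimary φ n J := by
  classical
  obtain ⟨m, rfl⟩ : ∃ m, n = m + 2 := ⟨n - 2, by omega⟩
  have hI' : IsPhiNAbsorbingPrimary φ (m + 1) I := hI
  have hInot' : ¬ IsNAbsorbingPrimary (m + 1) I := hInot
  unfold IsNAbsorbingPrimary at hInot'
  push_neg at hInot'
  obtain ⟨a, haI, hw2, hw3⟩ := hInot' hI'.1
  -- the product of the witness lies in φ I
  have hwφ : (∏ i, a i) ∈ φ I := by
    by_contra h
    rcases hI'.2 a haI h with h1 | ⟨i, h2⟩
    · exact hw2 h1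
    · exact hw3 i h2
  -- every element of I has its (m+2)-th power in φ I
  have hpow : ∀ x ∈ I, x ^ (m + 2) ∈ φ I := by
    intro x hx
    have key : ∀ k, ∀ S : Finset (Fin (m + 2)), Sᶜ.card = k + 1 →
        (∏ i ∈ S, a i) * x ^ (k + 1) ∈ φ I := by
      intro k
      induction k using Nat.strong_induction_on with
      | _ k ih =>
        intro S hS
        set g : Fin (m + 2) → R := fun i => if i ∈ S then 0 else x with hg
        have hgI : ∀ i, g i ∈ I := by
          intro i
          by_cases h : i ∈ S <;> simp [hg, h, hx, I.zero_mem]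
        set rest : R := ∑ T ∈ Sᶜ.powerset.erase ∅,
            (∏ i ∈ S, a i) * ((∏ i ∈ T, a i) * x ^ ((Sᶜ \ T).card)) with hrestdef
        have hfull : ∏ i, (a i + g i) = (∏ i ∈ S, a i) * x ^ (k + 1) + rest := by
          rw [← Finset.prod_mul_prod_compl S (fun i => a i + g i)]
          have hSprod : ∏ i ∈ S, (a i + g i) = ∏ i ∈ S, a i :=
            Finset.prod_congr rfl (fun i hi => by simp [hg, hi])
          have hCprod : ∏ i ∈ Sᶜ, (a i + g i)
              = ∑ T ∈ Sᶜ.powerset, (∏ i ∈ T, a i) * x ^ ((Sᶜ \ T).card) := by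
            have h1 : ∏ i ∈ Sᶜ, (a i + g i) = ∏ i ∈ Sᶜ, (a i + x) :=
              Finset.prod_congr rfl (fun i hi => by
                simp [hg, (Finset.mem_compl.mp hi)])
            rw [h1, Finset.prod_add]
            exact Finset.sum_congr rfl (fun T hT => by rw [Finset.prod_const])
          rw [hSprod, hCprod, Finset.mul_sum,
            ← Finset.add_sum_erase _ _ (Finset.empty_mem_powerset Sᶜ), hrestdef]
          simp [hS]
        have hrest : rest ∈ φ I := by
          rw [hrestdef]
          refine Ideal.sum_mem _ (fun T hT => ?_)
          obtain ⟨hTne, hTp⟩ := Finset.mem_erase.mp hT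
          have hTsub : T ⊆ Sᶜ := Finset.mem_powerset.mp hTp
          by_cases hTc : T = Sᶜ
          · subst hTc
            rw [← mul_assoc, Finset.prod_mul_prod_compl]
            simpa using hwφ
          · have hdis : Disjoint S T := by
              rw [Finset.disjoint_right]
              intro i hiT hiS
              exact (Finset.mem_compl.mp (hTsub hiT)) hiS
            have hne : (Sᶜ \ T).Nonempty := by
              obtain ⟨y, hy1, hy2⟩ :=
                Finset.exists_of_ssubset (ssubset_of_subset_of_ne hTsub hTc)
              exact ⟨y, Finset.mem_sdiff.mpr ⟨hy1, hy2⟩⟩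
            have h0 : 0 < (Sᶜ \ T).card := Finset.card_pos.mpr hne
            obtain ⟨d, hd⟩ : ∃ d, (Sᶜ \ T).card = d + 1 :=
              ⟨(Sᶜ \ T).card - 1, by omega⟩
            have hdlt : d < k := by
              have h1 : (Sᶜ \ T).card = Sᶜ.card - T.card := Finset.card_sdiff_of_subset hTsub
              have h2 : 0 < T.card :=
                Finset.card_pos.mpr (Finset.nonempty_of_ne_empty hTne)
              omega
            have hcomp : (S ∪ T)ᶜ.card = d + 1 := by
              rw [Finset.compl_union]
              have hinter : Sᶜ ∩ Tᶜ = Sᶜ \ T := by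
                ext j; simp [Finset.mem_sdiff, Finset.mem_inter, Finset.mem_compl]
              rw [hinter]; exact hd
            have hIH := ih d hdlt (S ∪ T) hcomp
            rw [← mul_assoc, ← Finset.prod_union hdis, hd]
            exact hIH
        have hprodI : (∏ i, (a i + g i)) ∈ I := by
          rw [hfull]
          exact I.add_mem (I.mul_mem_left _ (Ideal.pow_mem_of_mem I hx _ (Nat.succ_pos k)))
            (hφ I hrest)
        by_cases hPφ : (∏ i, (a i + g i)) ∈ φ I
        · have heq : (∏ i ∈ S, a i) * x ^ (k + 1) = (∏ i, (a i + g i)) - rest := by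
            rw [hfull]; ring
          rw [heq]
          exact Ideal.sub_mem _ hPφ hrest
        · exfalso
          rcases hI'.2 (fun i => a i + g i) hprodI hPφ with hA | ⟨i, hB⟩
          · refine hw2 ?_
            have hdiff := aux_prod_sub I (fun i : Fin (m + 1) => a i.castSucc)
              (fun i : Fin (m + 1) => g i.castSucc) Finset.univ (fun i _ => hgI _)
            have heq2 : (∏ i : Fin (m + 1), a i.castSucc)
                = (∏ i : Fin (m + 1), (a i.castSucc + g i.castSucc))
                  - ((∏ i : Fin (m + 1), (a i.castSucc + g i.castSucc))
                    - ∏ i : Fin (m + 1), a i.castSucc) := by ring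
            rw [heq2]
            exact I.sub_mem hA hdiff
          · refine hw3 i ?_
            have hgrad : ∀ j ∈ Finset.univ.erase (Fin.castSucc i), g j ∈ I.radical :=
              fun j _ => Ideal.le_radical (hgI j)
            have hdiff := aux_prod_sub I.radical a g
              (Finset.univ.erase (Fin.castSucc i)) hgrad
            have heq2 : (∏ j ∈ Finset.univ.erase (Fin.castSucc i), a j)
                = (∏ j ∈ Finset.univ.erase (Fin.castSucc i), (a j + g j))
                  - ((∏ j ∈ Finset.univ.erase (Fin.castSucc i), (a j + g j))
                    - ∏ j ∈ Finset.univ.erase (Fin.castSucc i), a j) := by ring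
            rw [heq2]
            exact Ideal.sub_mem _ hB hdiff
    have h := key (m + 1) ∅ (by
      rw [Finset.compl_empty, Finset.card_univ, Fintype.card_fin])
    simpa using h
  -- radical inclusion
  have hrad : I.radical ≤ J.radical := by
    have h1 : I ≤ J.radical := by
      intro x hx
      have : x ∈ (φ I).radical := Ideal.mem_radical_iff.mpr ⟨m + 2, hpow x hx⟩
      exact Ideal.radical_mono (le_trans hφIJ (hφ J)) this
    calc I.radical ≤ J.radical.radical := Ideal.radical_mono h1
    _ = J.radical := Ideal.radical_idem J
  -- main argument
  refine ⟨fun hJtop => hI'.1 (top_unique (hJtop ▸ hJI)), ?_⟩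
  intro b hbJ hbφ
  set c : Fin (m + 2) → R := Fin.snoc (Fin.init (Fin.init b))
      (b ((Fin.last (m + 1)).castSucc) * b (Fin.last (m + 2))) with hc
  have hprodc : ∏ i, c i = ∏ i, b i := by
    rw [Fin.prod_univ_castSucc c, Fin.prod_univ_castSucc b,
      Fin.prod_univ_castSucc (fun i : Fin (m + 2) => b i.castSucc)]
    simp only [hc, Fin.snoc_castSucc, Fin.snoc_last]
    show (∏ i : Fin (m + 1), Fin.init (Fin.init b) i) * _ = _
    have : ∀ i : Fin (m + 1), Fin.init (Fin.init b) i = b i.castSucc.castSucc := fun i => rfl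
    simp only [this]
    ring
  have hcI : (∏ i, c i) ∈ I := by rw [hprodc]; exact hJI hbJ
  have hcφ : (∏ i, c i) ∉ φ I := by
    rw [hprodc]
    exact fun h => hbφ (hφIJ h)
  have hbsnoc : (Fin.snoc (Fin.init b) (b (Fin.last (m + 2))) : Fin (m + 3) → R) = b :=
    Fin.snoc_init_self b
  rcases hI'.2 c hcI hcφ with hA | ⟨i, hB⟩
  · -- first m+1 product of c is in I
    refine Or.inr ⟨Fin.last (m + 1), ?_⟩
    have hA' : (∏ i : Fin (m + 1), Fin.init (Fin.init b) i) ∈ I := by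
      have : ∀ i : Fin (m + 1), c i.castSucc = Fin.init (Fin.init b) i := fun i => by
        rw [hc]; exact Fin.snoc_castSucc _ _ i
      rwa [Finset.prod_congr rfl (fun i _ => this i)] at hA
    have stepA : ∏ j ∈ Finset.univ.erase ((Fin.last (m + 1)).castSucc), b j
        = b (Fin.last (m + 2)) * ∏ j ∈ Finset.univ.erase (Fin.last (m + 1)), Fin.init b j := by
      conv_lhs => rw [← hbsnoc]
      exact aux_snoc_erase_castSucc (Fin.init b) (b (Fin.last (m + 2))) (Fin.last (m + 1))
    have stepA2 : ∏ j ∈ Finset.univ.erase (Fin.last (m + 1)), Fin.init b j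
        = ∏ i : Fin (m + 1), Fin.init (Fin.init b) i := by
      rw [aux_prod_erase_last (Fin.init b)]
      rfl
    rw [stepA, stepA2]
    exact Ideal.mul_mem_left _ _ (hrad (Ideal.le_radical hA'))
  · -- an erase-product of c is in √I
    refine Or.inr ⟨i.castSucc, ?_⟩
    have hB' : (b ((Fin.last (m + 1)).castSucc) * b (Fin.last (m + 2))) *
        (∏ j ∈ Finset.univ.erase i, Fin.init (Fin.init b) j) ∈ I.radical := by
      have := aux_snoc_erase_castSucc (Fin.init (Fin.init b))
        (b ((Fin.last (m + 1)).castSucc) * b (Fin.last (m + 2))) i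
      rw [hc] at hB
      rwa [this] at hB
    have step1 : ∏ j ∈ Finset.univ.erase (i.castSucc.castSucc), b j
        = b (Fin.last (m + 2)) * ∏ j ∈ Finset.univ.erase i.castSucc, Fin.init b j := by
      conv_lhs => rw [← hbsnoc]
      exact aux_snoc_erase_castSucc (Fin.init b) (b (Fin.last (m + 2))) i.castSucc
    have step2 : ∏ j ∈ Finset.univ.erase i.castSucc, Fin.init b j
        = Fin.init b (Fin.last (m + 1)) * ∏ j ∈ Finset.univ.erase i, Fin.init (Fin.init b) j := by
      conv_lhs => rw [← Fin.snoc_init_self (Fin.init b)]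
      exact aux_snoc_erase_castSucc (Fin.init (Fin.init b)) (Fin.init b (Fin.last (m + 1))) i
    have hsplit : ∏ j ∈ Finset.univ.erase (i.castSucc.castSucc), b j
        = (b ((Fin.last (m + 1)).castSucc) * b (Fin.last (m + 2))) *
          (∏ j ∈ Finset.univ.erase i, Fin.init (Fin.init b) j) := by
      rw [step1, step2]
      show b (Fin.last (m + 2)) * (b ((Fin.last (m + 1)).castSucc) * _) = _
      ring
    rw [hsplit]
    exact hrad hB'
end

section
/- Let R be a u-ring, i.e. a commutative ring with the property that an ideal contained in a finite union of ideals must be contained in one of those ideals, and let φ be a function from the set of ideals of R to itself with φ(J) ⊆ J for every ideal J. Then a proper ideal I of R is a strongly φ-n-absorbing primary ideal of R if and only if I is a φ-n-absorbing primary ideal of R. -/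
/-- A proper ideal `I` is strongly `φ`-`n`-absorbing primary: whenever
`I₁ ⋯ I_{n+1} ⊆ I` and `I₁ ⋯ I_{n+1} ⊄ φ I`, either `I₁ ⋯ I_n ⊆ I` or the
product of `I_{n+1}` with `n - 1` of `I₁, …, I_n` is contained in `√I`. -/
def IsStronglyPhiNAbsorbingPrimary {R : Type*} [CommRing R] (φ : Ideal R → Ideal R)
    (n : ℕ) (I : Ideal R) : Prop :=
  I ≠ ⊤ ∧ ∀ J : Fin (n + 1) → Ideal R,
    (∏ i, J i) ≤ I → ¬ (∏ i, J i) ≤ φ I →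
      ((∏ i : Fin n, J i.castSucc) ≤ I ∨
        ∃ i : Fin n, (∏ j ∈ Finset.univ.erase i.castSucc, J j) ≤ I.radical)

/-- A `u`-ring: an ideal contained in a finite union of ideals is contained in
one of them. -/
def IsURing (R : Type*) [CommRing R] : Prop :=
  ∀ (s : Finset (Ideal R)) (I : Ideal R),
    (I : Set R) ⊆ (⋃ J ∈ s, (J : Set R)) → ∃ J ∈ s, I ≤ J

section Aux

variable {R : Type*} [CommRing R]

lemma prod_update_of_mem_aux {ι : Type*} [DecidableEq ι] (J : ι → Ideal R) (p : ι)
    (v : Ideal R) (S : Finset ι) (hp : p ∈ S) :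
    ∏ j ∈ S, Function.update J p v j = v * ∏ j ∈ S.erase p, J j := by
  rw [← Finset.mul_prod_erase S _ hp, Function.update_self]
  congr 1
  exact Finset.prod_congr rfl fun j hj =>
    Function.update_of_ne (Finset.ne_of_mem_erase hj) _ _

lemma prod_update_of_not_mem_aux {ι : Type*} [DecidableEq ι] (J : ι → Ideal R) (p : ι)
    (v : Ideal R) (S : Finset ι) (hp : p ∉ S) :
    ∏ j ∈ S, Function.update J p v j = ∏ j ∈ S, J j :=
  Finset.prod_congr rfl fun j hj =>
    Function.update_of_ne (by rintro rfl; exact hp hj) _ _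

lemma colon_case_aux (M N J : Ideal R) (h : J ≤ M.colon N) : J * N ≤ M :=
  Ideal.mul_le.2 fun a ha b hb => by
    simpa [smul_eq_mul] using Submodule.mem_colon.1 (h ha) b hb

lemma mem_colon_of_span_mul_le (M N : Ideal R) (x : R) (h : Ideal.span {x} * N ≤ M) :
    x ∈ M.colon N :=
  Submodule.mem_colon.2 fun q hq => by
    simpa [smul_eq_mul] using h (Ideal.mul_mem_mul (Ideal.mem_span_singleton_self x) hq)

lemma phi_absorbing_aux (n : ℕ) (hu : IsURing R) (φ : Ideal R → Ideal R)
    (I : Ideal R) (h : IsPhiNAbsorbingPrimary φ n I) :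
    ∀ m : ℕ, ∀ J : Fin (n + 1) → Ideal R,
      (∀ i : Fin (n + 1), m ≤ i.val → ∃ a, J i = Ideal.span {a}) →
      (∏ i, J i) ≤ I → ¬ (∏ i, J i) ≤ φ I →
      ((∏ i : Fin n, J i.castSucc) ≤ I ∨
        ∃ i : Fin n, (∏ j ∈ Finset.univ.erase i.castSucc, J j) ≤ I.radical) := by
  intro m
  induction m with
  | zero =>
    intro J hprin hle hnle
    choose a ha using fun i => hprin i (Nat.zero_le _)
    have hprod : ∀ S : Finset (Fin (n + 1)), ∏ j ∈ S, J j = Ideal.span {∏ j ∈ S, a j} :=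
      fun S => by rw [Finset.prod_congr rfl (fun j _ => ha j), Ideal.prod_span_singleton]
    have hmem : (∏ i, a i) ∈ I :=
      (Ideal.span_singleton_le_iff_mem I).1 (by rw [← hprod Finset.univ]; exact hle)
    have hnmem : (∏ i, a i) ∉ φ I := fun hc =>
      hnle (by rw [hprod Finset.univ]; exact (Ideal.span_singleton_le_iff_mem _).2 hc)
    rcases h.2 a hmem hnmem with h1 | ⟨i, hi⟩
    · left
      have : ∏ i : Fin n, J i.castSucc = Ideal.span {∏ i : Fin n, a i.castSucc} := by
        rw [Finset.prod_congr rfl (fun j _ => ha j.castSucc), Ideal.prod_span_singleton]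
      rw [this]
      exact (Ideal.span_singleton_le_iff_mem I).2 h1
    · right
      exact ⟨i, by rw [hprod]; exact (Ideal.span_singleton_le_iff_mem _).2 hi⟩
  | succ m ih =>
    by_cases hm : m < n + 1
    · intro J hprin hle hnle
      classical
      by_contra hcon
      push_neg at hcon
      obtain ⟨h1, h2⟩ := hcon
      set p : Fin (n + 1) := ⟨m, hm⟩ with hp
      have hpv : (p : ℕ) = m := rfl
      set Q := ∏ j ∈ Finset.univ.erase p, J j with hQ
      have hprodJ : (∏ i, J i) = J p * Q :=
        (Finset.mul_prod_erase _ _ (Finset.mem_univ p)).symm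
      set S0 : Finset (Fin (n + 1)) := Finset.univ.image Fin.castSucc with hS0def
      have hS0 : ∀ K : Fin (n + 1) → Ideal R,
          ∏ i : Fin n, K i.castSucc = ∏ j ∈ S0, K j := fun K =>
        (Finset.prod_image (fun a _ b _ hab => Fin.castSucc_injective n hab)).symm
      set B := (φ I).colon Q with hB
      set C0 : Ideal R :=
        if p ∈ S0 then I.colon ((∏ j ∈ S0.erase p, J j : Ideal R) : Set R) else B with hC0
      set Ci : Fin n → Ideal R := fun i =>
        if p ∈ Finset.univ.erase i.castSucc then
          I.radical.colon ((∏ j ∈ (Finset.univ.erase i.castSucc).erase p, J j : Ideal R) : Set R)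
        else B with hCi
      set s : Finset (Ideal R) :=
        insert B (insert C0 (Finset.image Ci Finset.univ)) with hs
      have hcov : (J p : Set R) ⊆ ⋃ K ∈ s, (K : Set R) := by
        intro x hx
        by_cases hb : Ideal.span {x} * Q ≤ φ I
        · exact Set.mem_iUnion₂.2 ⟨B, by simp [hs], mem_colon_of_span_mul_le _ _ _ hb⟩
        · set K := Function.update J p (Ideal.span {x}) with hK
          have hKprod : ∏ i, K i = Ideal.span {x} * Q :=
            prod_update_of_mem_aux J p _ _ (Finset.mem_univ p)
          have hKle : (∏ i, K i) ≤ I := by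
            rw [hKprod]
            calc Ideal.span {x} * Q ≤ J p * Q :=
                  mul_le_mul_left ((Ideal.span_singleton_le_iff_mem _).2 hx) Q
              _ ≤ I := hprodJ ▸ hle
          have hKnle : ¬ (∏ i, K i) ≤ φ I := by rw [hKprod]; exact hb
          have hKprin : ∀ i : Fin (n + 1), m ≤ i.val → ∃ a, K i = Ideal.span {a} := by
            intro i hi
            by_cases hip : i = p
            · exact ⟨x, by rw [hip, hK, Function.update_self]⟩
            · have : m + 1 ≤ i.val := by
                rcases Nat.lt_or_ge i.val (m + 1) with h' | h'
                · exact absurd (Fin.ext (show i.val = p.val by omega)) hip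
                · exact h'
              obtain ⟨a, haa⟩ := hprin i this
              exact ⟨a, by rw [hK, Function.update_of_ne hip]; exact haa⟩
          rcases ih K hKprin hKle hKnle with hc1 | ⟨i, hci⟩
          · rw [hS0 K] at hc1
            by_cases hpS : p ∈ S0
            · rw [prod_update_of_mem_aux J p _ _ hpS] at hc1
              refine Set.mem_iUnion₂.2 ⟨C0, by simp [hs], ?_⟩
              rw [hC0, if_pos hpS]
              exact mem_colon_of_span_mul_le _ _ _ hc1
            · rw [prod_update_of_not_mem_aux J p _ _ hpS, ← hS0 J] at hc1
              exact absurd hc1 h1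
          · by_cases hpS : p ∈ Finset.univ.erase i.castSucc
            · rw [prod_update_of_mem_aux J p _ _ hpS] at hci
              refine Set.mem_iUnion₂.2 ⟨Ci i, by simp [hs], ?_⟩
              rw [hCi]
              simp only [if_pos hpS]
              exact mem_colon_of_span_mul_le _ _ _ hci
            · rw [prod_update_of_not_mem_aux J p _ _ hpS] at hci
              exact absurd hci (h2 i)
      obtain ⟨T, hTs, hT⟩ := hu s (J p) hcov
      have hBfalse : ¬ J p ≤ B := fun hle' =>
        hnle (hprodJ ▸ colon_case_aux _ _ _ hle')
      rw [hs] at hTs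
      simp only [Finset.mem_insert, Finset.mem_image, Finset.mem_univ, true_and] at hTs
      rcases hTs with rfl | rfl | ⟨i, rfl⟩
      · exact hBfalse hT
      · rw [hC0] at hT
        by_cases hpS : p ∈ S0
        · rw [if_pos hpS] at hT
          have : J p * ∏ j ∈ S0.erase p, J j ≤ I := colon_case_aux _ _ _ hT
          rw [Finset.mul_prod_erase _ _ hpS, ← hS0 J] at this
          exact h1 this
        · rw [if_neg hpS] at hT
          exact hBfalse hT
      · simp only [hCi] at hT
        by_cases hpS : p ∈ Finset.univ.erase i.castSucc
        · rw [if_pos hpS] at hT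
          have : J p * ∏ j ∈ (Finset.univ.erase i.castSucc).erase p, J j ≤ I.radical :=
            colon_case_aux _ _ _ hT
          rw [Finset.mul_prod_erase _ _ hpS] at this
          exact h2 i this
        · rw [if_neg hpS] at hT
          exact hBfalse hT
    · intro J hprin hle hnle
      refine ih J (fun i hi => ?_) hle hnle
      have := i.isLt
      omega

end Aux

/-- Theorem 5.4: over a `u`-ring, an ideal is strongly `φ`-`n`-absorbing
primary iff it is `φ`-`n`-absorbing primary. -/
theorem stmt_18 {R : Type*} [CommRing R] [Nontrivial R] (n : ℕ) (hn : 0 < n)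
    (hu : IsURing R) (φ : Ideal R → Ideal R) (hφ : ∀ J : Ideal R, φ J ≤ J)
    (I : Ideal R) (hI : I ≠ ⊤) :
    IsStronglyPhiNAbsorbingPrimary φ n I ↔ IsPhiNAbsorbingPrimary φ n I := by
  constructor
  · rintro ⟨hne, hs⟩
    refine ⟨hne, fun a hmem hnmem => ?_⟩
    have hprod : ∀ S : Finset (Fin (n + 1)),
        ∏ j ∈ S, Ideal.span {a j} = Ideal.span {∏ j ∈ S, a j} :=
      fun S => Ideal.prod_span_singleton S a
    have hle : (∏ i, Ideal.span {a i}) ≤ I := by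
      rw [hprod Finset.univ]
      exact (Ideal.span_singleton_le_iff_mem I).2 hmem
    have hnle : ¬ (∏ i, Ideal.span {a i}) ≤ φ I := fun hc => by
      rw [hprod Finset.univ] at hc
      exact hnmem ((Ideal.span_singleton_le_iff_mem _).1 hc)
    rcases hs (fun i => Ideal.span {a i}) hle hnle with h1 | ⟨i, hi⟩
    · left
      rw [show ∏ i : Fin n, Ideal.span {a i.castSucc}
            = Ideal.span {∏ i : Fin n, a i.castSucc} from
          Ideal.prod_span_singleton _ _] at h1
      exact (Ideal.span_singleton_le_iff_mem I).1 h1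
    · right
      rw [hprod] at hi
      exact ⟨i, (Ideal.span_singleton_le_iff_mem _).1 hi⟩
  · intro h
    refine ⟨hI, fun J hle hnle => ?_⟩
    refine phi_absorbing_aux n hu φ I h (n + 1) J (fun i hi => ?_) hle hnle
    have := i.isLt
    omega
end
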